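/- arXiv:2011.07752 — 5 statements merged into one kernel-verified Lean document; each statement's English description precedes it below -/
import Mathlib

section
/- Let H = (V,𝓔) be a hypergraph as above and let x ∈ ℝ^V have nonnegative entries. For each hyperedge e let (a_e*, b_e*) be a minimizer of the inner problem defining Q_e(x), and define L_e(x) ∈ ℝ^V by L_e(x)_v = (x_v − a_e*)₊ − (b_e* − x_v)₊ for v ∈ e and L_e(x)_v = 0 otherwise. Then for every sweep set S_j^x with 0 < vol(S_j^x) < M, setting σ_j = ( 1 + 2 max_{e∈∂S_j^x} min{δ_e, |e|/2} )^{-1} (and σ_j = 1 if ∂S_j^x = ∅), the quantities vol(S_j^x) ± σ_j cut_H(S_j^x) lie in [0, M] and 2 I_x(vol(S_j^x)) − Σ_{e∈𝓔} Σ_{v∈S_j^x} L_e(x)_v ≤ I_x( vol(S_j^x) − σ_j cut_H(S_j^x) ) + I_x( vol(S_j^x) + σ_j cut_H(S_j^x) ). -/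
open Finset

noncomputable section

/-- δ-linear splitting penalty of the set `S` within hyperedge `ε`:
`f_ε(e_ε ∩ S) = min {|e_ε ∩ S|, |e_ε ∖ S|, δ_ε}`. -/
def hsplit {V E : Type*} [DecidableEq V] (e : E → Finset V) (δe : E → ℝ)
    (ε : E) (S : Finset V) : ℝ :=
  min (min ((e ε ∩ S).card : ℝ) ((e ε \ S).card : ℝ)) (δe ε)

/-- Hypergraph cut `cut_H(S) = Σ_ε f_ε(e_ε ∩ S)`. -/
def hcut {V E : Type*} [Fintype E] [DecidableEq V] (e : E → Finset V) (δe : E → ℝ)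
    (S : Finset V) : ℝ :=
  ∑ ε : E, hsplit e δe ε S

/-- Degree `d_v = Σ_{ε : v ∈ e_ε} f_ε({v})`. -/
def hdeg {V E : Type*} [Fintype E] [DecidableEq V] (e : E → Finset V) (δe : E → ℝ)
    (v : V) : ℝ :=
  ∑ ε ∈ univ.filter (fun ε => v ∈ e ε), hsplit e δe ε {v}

/-- Volume `vol(S) = Σ_{v∈S} d_v`. -/
def hvol {V E : Type*} [Fintype E] [DecidableEq V] (e : E → Finset V) (δe : E → ℝ)
    (S : Finset V) : ℝ :=
  ∑ v ∈ S, hdeg e δe v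

/-- Total volume `M = vol(V)`. -/
def hM {V E : Type*} [Fintype V] [Fintype E] [DecidableEq V] (e : E → Finset V)
    (δe : E → ℝ) : ℝ :=
  hvol e δe univ

/-- Hypergraph conductance `φ(S) = cut_H(S) / min(vol S, M − vol S)`. -/
def hcond {V E : Type*} [Fintype V] [Fintype E] [DecidableEq V] (e : E → Finset V)
    (δe : E → ℝ) (S : Finset V) : ℝ :=
  hcut e δe S / min (hvol e δe S) (hM e δe - hvol e δe S)

/-- Inner gadget objective of hyperedge `ε`:
`Σ_{v∈e_ε} ((x_v−a)₊² + (b−x_v)₊²) + δ_ε (a−b)₊²`. -/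
def innerQ {V E : Type*} [DecidableEq V] (e : E → Finset V) (δe : E → ℝ) (ε : E)
    (x : V → ℝ) (a b : ℝ) : ℝ :=
  ∑ v ∈ e ε, ((max (x v - a) 0) ^ 2 + (max (b - x v) 0) ^ 2)
    + δe ε * (max (a - b) 0) ^ 2

/-- `Q_ε(x) = min_{a,b∈ℝ} innerQ`. -/
def Qe {V E : Type*} [DecidableEq V] (e : E → Finset V) (δe : E → ℝ) (ε : E)
    (x : V → ℝ) : ℝ :=
  sInf {q : ℝ | ∃ a b : ℝ, q = innerQ e δe ε x a b}

/-- The diffusion objective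
`Q(x) = γ Σ_v d_v (x_v − 1_S(v)/vol S)² + Σ_ε Q_ε(x)` for a seed set `S`. -/
def Qobj {V E : Type*} [Fintype V] [Fintype E] [DecidableEq V] (e : E → Finset V)
    (δe : E → ℝ) (γ : ℝ) (S : Finset V) (x : V → ℝ) : ℝ :=
  γ * ∑ v : V, hdeg e δe v * (x v - (if v ∈ S then 1 else 0) / hvol e δe S) ^ 2
    + ∑ ε : E, Qe e δe ε x

end

open Finset in
/-- Cumulative volume of the first `j` vertices in the order `σ`. -/
noncomputable def cumVol {V : Type*} {n : ℕ} (σ : Fin n ≃ V) (d : V → ℝ) (j : ℕ) : ℝ :=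
  ∑ i ∈ univ.filter (fun i : Fin n => (i : ℕ) < j), d (σ i)

open Finset in
/-- The Lovász–Simonovits curve of `x` with respect to a (decreasingly sorted)
enumeration `σ`: the piecewise-linear function on `[0,M]` with `I_x(0) = 0`,
breakpoints `I_x(vol S_j) = Σ_{v∈S_j} d_v x_v`, and linear interpolation in between. -/
noncomputable def LScurve {V : Type*} {n : ℕ} (σ : Fin n ≃ V) (d x : V → ℝ)
    (k : ℝ) : ℝ :=
  ∑ i : Fin n,
    x (σ i) * (min k (cumVol σ d ((i : ℕ) + 1)) - min k (cumVol σ d (i : ℕ)))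

open Finset in
/-- The sweep set consisting of the first `j` vertices in the order `σ`. -/
def sweepSet {V : Type*} [DecidableEq V] {n : ℕ} (σ : Fin n ≃ V) (j : ℕ) : Finset V :=
  (univ.filter (fun i : Fin n => (i : ℕ) < j)).image σ

/-- The boundary of `T`: hyperedges cut by `T`. -/
def hbdry {V E : Type*} [DecidableEq V] (e : E → Finset V) (T : Finset V) : Set E :=
  {ε | (e ε ∩ T).Nonempty ∧ (e ε \ T).Nonempty}

/-- `δ̄(T) = max_{ε ∈ ∂T} min{δ_ε, |e_ε|/2}` (with value `0` if `∂T = ∅`). -/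
noncomputable def deltaBar {V E : Type*} [DecidableEq V] (e : E → Finset V)
    (δe : E → ℝ) (T : Finset V) : ℝ :=
  sSup ((fun ε => min (δe ε) (((e ε).card : ℝ) / 2)) '' hbdry e T)


/-! ### Auxiliary lemmas for the diffusion lemma -/

section AuxLemmas
open Finset

lemma sq_shift_aux (p q : ℝ) : max (p - q) 0 ^ 2 ≤ max p 0 ^ 2 - 2*q*(max p 0) + q^2 := by
  rcases le_total p 0 with h | h <;> rcases le_total (p - q) 0 with h2 | h2 <;>
    simp [max_eq_right, max_eq_left, h, h2] <;> nlinarith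

lemma key_quad_aux {C : ℝ} (hC : 0 < C) {K : ℝ} (h : ∀ t : ℝ, 0 ≤ t * K + C * t ^ 2) :
    K = 0 := by
  have h1 := h (-(K / (2*C)))
  have e : (-(K/(2*C)))*K + C*(-(K/(2*C)))^2 = -(K^2/(4*C)) := by
    field_simp; ring
  rw [e] at h1
  have h2 : K^2/(4*C) ≤ 0 := by linarith
  have h4 : (0:ℝ) < 4*C := by linarith
  rcases div_nonpos_iff.mp h2 with ⟨ha, hb⟩ | ⟨ha, hb⟩ <;>
    nlinarith [sq_nonneg K, sq_abs K, abs_nonneg K]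

lemma stationary_aux {V E : Type*} [DecidableEq V] (e : E → Finset V) (δe : E → ℝ) (ε : E)
    (hδ : 1 ≤ δe ε) (x : V → ℝ) (a b : ℝ)
    (hmin : ∀ a' b' : ℝ, innerQ e δe ε x a b ≤ innerQ e δe ε x a' b') :
    (∑ v ∈ e ε, max (x v - a) 0) = δe ε * max (a - b) 0 ∧
    (∑ v ∈ e ε, max (b - x v) 0) = δe ε * max (a - b) 0 := by
  set C : ℝ := ((e ε).card : ℝ) + δe ε with hCdef
  have hC : 0 < C := by
    have : (0:ℝ) ≤ ((e ε).card : ℝ) := Nat.cast_nonneg _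
    rw [hCdef]; linarith
  constructor
  · have hKa : ∀ t : ℝ, 0 ≤ t * (2 * (δe ε * max (a - b) 0) - 2 * ∑ v ∈ e ε, max (x v - a) 0) + C * t ^ 2 := by
      intro t
      have h1 := hmin (a + t) b
      have hsum : ∑ v ∈ e ε, ((max (x v - (a+t)) 0) ^ 2 + (max (b - x v) 0) ^ 2) ≤
          (∑ v ∈ e ε, ((max (x v - a) 0) ^ 2 + (max (b - x v) 0) ^ 2))
            - 2*t*(∑ v ∈ e ε, max (x v - a) 0) + ((e ε).card : ℝ) * t^2 := by
        have hterm : ∀ v ∈ e ε, (max (x v - (a+t)) 0) ^ 2 + (max (b - x v) 0) ^ 2 ≤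
            ((max (x v - a) 0) ^ 2 + (max (b - x v) 0) ^ 2) - 2*t*(max (x v - a) 0) + t^2 := by
          intro v _
          have := sq_shift_aux (x v - a) t
          have hxv : x v - (a + t) = x v - a - t := by ring
          rw [hxv]; linarith
        calc ∑ v ∈ e ε, ((max (x v - (a+t)) 0) ^ 2 + (max (b - x v) 0) ^ 2)
            ≤ ∑ v ∈ e ε, (((max (x v - a) 0) ^ 2 + (max (b - x v) 0) ^ 2) - 2*t*(max (x v - a) 0) + t^2) :=
              Finset.sum_le_sum hterm
          _ = (∑ v ∈ e ε, ((max (x v - a) 0) ^ 2 + (max (b - x v) 0) ^ 2))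
              - 2*t*(∑ v ∈ e ε, max (x v - a) 0) + ((e ε).card : ℝ) * t^2 := by
              rw [Finset.sum_add_distrib, Finset.sum_sub_distrib, ← Finset.mul_sum,
                Finset.sum_const, nsmul_eq_mul]
      have hδt : δe ε * (max ((a+t) - b) 0) ^ 2 ≤
          δe ε * ((max (a - b) 0) ^ 2 + 2*t*(max (a - b) 0) + t^2) := by
        have hab : (a + t) - b = a - b - (-t) := by ring
        rw [hab]
        have := mul_le_mul_of_nonneg_left (by linarith [sq_shift_aux (a - b) (-t)] :
          max (a - b - (-t)) 0 ^ 2 ≤ (max (a-b) 0)^2 + 2*t*(max (a-b) 0) + t^2) (by linarith : (0:ℝ) ≤ δe ε)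
        linarith
      unfold innerQ at h1
      nlinarith [h1, hsum, hδt, sq_nonneg t]
    have := key_quad_aux hC hKa
    linarith
  · have hKb : ∀ t : ℝ, 0 ≤ t * (2 * (∑ v ∈ e ε, max (b - x v) 0) - 2 * (δe ε * max (a - b) 0)) + C * t ^ 2 := by
      intro t
      have h1 := hmin a (b + t)
      have hsum : ∑ v ∈ e ε, ((max (x v - a) 0) ^ 2 + (max ((b+t) - x v) 0) ^ 2) ≤
          (∑ v ∈ e ε, ((max (x v - a) 0) ^ 2 + (max (b - x v) 0) ^ 2))
            + 2*t*(∑ v ∈ e ε, max (b - x v) 0) + ((e ε).card : ℝ) * t^2 := by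
        have hterm : ∀ v ∈ e ε, (max (x v - a) 0) ^ 2 + (max ((b+t) - x v) 0) ^ 2 ≤
            ((max (x v - a) 0) ^ 2 + (max (b - x v) 0) ^ 2) + 2*t*(max (b - x v) 0) + t^2 := by
          intro v _
          have hxv : (b + t) - x v = b - x v - (-t) := by ring
          rw [hxv]; nlinarith [sq_shift_aux (b - x v) (-t)]
        calc ∑ v ∈ e ε, ((max (x v - a) 0) ^ 2 + (max ((b+t) - x v) 0) ^ 2)
            ≤ ∑ v ∈ e ε, (((max (x v - a) 0) ^ 2 + (max (b - x v) 0) ^ 2) + 2*t*(max (b - x v) 0) + t^2) :=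
              Finset.sum_le_sum hterm
          _ = (∑ v ∈ e ε, ((max (x v - a) 0) ^ 2 + (max (b - x v) 0) ^ 2))
              + 2*t*(∑ v ∈ e ε, max (b - x v) 0) + ((e ε).card : ℝ) * t^2 := by
              rw [Finset.sum_add_distrib, Finset.sum_add_distrib, ← Finset.mul_sum,
                Finset.sum_const, nsmul_eq_mul]
      have hδt : δe ε * (max (a - (b+t)) 0) ^ 2 ≤
          δe ε * ((max (a - b) 0) ^ 2 - 2*t*(max (a - b) 0) + t^2) := by
        have hab : a - (b + t) = a - b - t := by ring
        rw [hab]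
        have := mul_le_mul_of_nonneg_left (sq_shift_aux (a - b) t) (by linarith : (0:ℝ) ≤ δe ε)
        linarith
      unfold innerQ at h1
      nlinarith [h1, hsum, hδt]
    have := key_quad_aux hC hKb
    linarith

lemma per_edge_aux {V : Type*} [DecidableEq V] (A B : Finset V)
    (x : V → ℝ) (a b δ m : ℝ)
    (hst1 : (∑ v ∈ A, max (x v - a) 0) + (∑ v ∈ B, max (x v - a) 0) = δ * max (a - b) 0)
    (hst2 : (∑ v ∈ A, max (b - x v) 0) + (∑ v ∈ B, max (b - x v) 0) = δ * max (a - b) 0)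
    (hm0 : 0 ≤ m) (hmA : 3*m ≤ A.card) (hmB : 3*m ≤ B.card) (hmδ : 3*m ≤ δ)
    {vs ws : V} (hvs : vs ∈ A) (hvsm : ∀ v ∈ A, x vs ≤ x v)
    (hws : ws ∈ B) (hwsm : ∀ v ∈ B, x v ≤ x ws)
    (hcross : x ws ≤ x vs) :
    m * (x vs - x ws) ≤ ∑ v ∈ A, (max (x v - a) 0 - max (b - x v) 0) := by
  set α := x vs with hα
  set β := x ws with hβ
  set P := ∑ v ∈ A, max (x v - a) 0 with hP
  set N := ∑ v ∈ A, max (b - x v) 0 with hN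
  set PB := ∑ v ∈ B, max (x v - a) 0 with hPB
  set NB := ∑ v ∈ B, max (b - x v) 0 with hNB
  have hrw : ∑ v ∈ A, (max (x v - a) 0 - max (b - x v) 0) = P - N := by
    rw [Finset.sum_sub_distrib]
  rw [hrw]
  have hP0 : 0 ≤ P := Finset.sum_nonneg fun v _ => le_max_right _ 0
  have hN0 : 0 ≤ N := Finset.sum_nonneg fun v _ => le_max_right _ 0
  have hPB0 : 0 ≤ PB := Finset.sum_nonneg fun v _ => le_max_right _ 0
  have hNB0 : 0 ≤ NB := Finset.sum_nonneg fun v _ => le_max_right _ 0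
  have hba : b ≤ a := by
    by_contra hab
    push_neg at hab
    have hmx : max (a - b) 0 = 0 := max_eq_right (by linarith)
    rw [hmx, mul_zero] at hst1 hst2
    have hPz : P = 0 := by linarith
    have hNz : N = 0 := by linarith
    have h1 : max (α - a) 0 ≤ 0 := by
      rw [hP] at hPz
      have := (Finset.sum_eq_zero_iff_of_nonneg (fun v _ => le_max_right _ 0)).mp hPz vs hvs
      simp [hα, this]
    have h2 : max (b - α) 0 ≤ 0 := by
      rw [hN] at hNz
      have := (Finset.sum_eq_zero_iff_of_nonneg (fun v _ => le_max_right _ 0)).mp hNz vs hvs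
      simp [hα, this]
    have := le_max_left (α - a) 0
    have := le_max_left (b - α) 0
    linarith
  have hmaxab : max (a - b) 0 = a - b := max_eq_left (by linarith)
  rw [hmaxab] at hst1 hst2
  have hPl : (A.card : ℝ) * max (α - a) 0 ≤ P := by
    rw [hP]
    calc (A.card : ℝ) * max (α - a) 0 = ∑ _v ∈ A, max (α - a) 0 := by
          rw [Finset.sum_const, nsmul_eq_mul]
      _ ≤ ∑ v ∈ A, max (x v - a) 0 :=
          Finset.sum_le_sum fun v hv => max_le_max (by linarith [hvsm v hv]) le_rfl
  have hNl : N ≤ (A.card : ℝ) * max (b - α) 0 := by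
    rw [hN]
    calc ∑ v ∈ A, max (b - x v) 0 ≤ ∑ _v ∈ A, max (b - α) 0 :=
          Finset.sum_le_sum fun v hv => max_le_max (by linarith [hvsm v hv]) le_rfl
      _ = (A.card : ℝ) * max (b - α) 0 := by rw [Finset.sum_const, nsmul_eq_mul]
  have hPBl : PB ≤ (B.card : ℝ) * max (β - a) 0 := by
    rw [hPB]
    calc ∑ v ∈ B, max (x v - a) 0 ≤ ∑ _v ∈ B, max (β - a) 0 :=
          Finset.sum_le_sum fun v hv => max_le_max (by linarith [hwsm v hv]) le_rfl
      _ = (B.card : ℝ) * max (β - a) 0 := by rw [Finset.sum_const, nsmul_eq_mul]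
  have hNBl : (B.card : ℝ) * max (b - β) 0 ≤ NB := by
    rw [hNB]
    calc (B.card : ℝ) * max (b - β) 0 = ∑ _v ∈ B, max (b - β) 0 := by
          rw [Finset.sum_const, nsmul_eq_mul]
      _ ≤ ∑ v ∈ B, max (b - x v) 0 :=
          Finset.sum_le_sum fun v hv => max_le_max (by linarith [hwsm v hv]) le_rfl
  have hcA : (0:ℝ) ≤ A.card := Nat.cast_nonneg _
  have hcB : (0:ℝ) ≤ B.card := Nat.cast_nonneg _
  rcases le_or_gt b α with hbα | hbα
  · rcases le_or_gt β a with hβa | hβa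
    · have e1 : max (b - α) 0 = 0 := max_eq_right (by linarith)
      have e2 : max (β - a) 0 = 0 := max_eq_right (by linarith)
      rw [e1, mul_zero] at hNl
      rw [e2, mul_zero] at hPBl
      have b1 : (A.card : ℝ) * max (α - a) 0 ≤ P - N := by linarith
      have b2 : (B.card : ℝ) * max (b - β) 0 ≤ P - N := by linarith
      have b3 : δ * (a - b) ≤ P - N := by linarith
      have hsplit' : α - β ≤ max (α - a) 0 + (a - b) + max (b - β) 0 := by
        have := le_max_left (α - a) 0
        have := le_max_left (b - β) 0
        linarith
      have m1 : m * max (α - a) 0 ≤ (A.card : ℝ)/3 * max (α - a) 0 :=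
        mul_le_mul_of_nonneg_right (by linarith) (le_max_right _ 0)
      have m2 : m * max (b - β) 0 ≤ (B.card : ℝ)/3 * max (b - β) 0 :=
        mul_le_mul_of_nonneg_right (by linarith) (le_max_right _ 0)
      have m3 : m * (a - b) ≤ δ/3 * (a - b) :=
        mul_le_mul_of_nonneg_right (by linarith) (by linarith)
      have s0 : m * (α - β) ≤ m * (max (α - a) 0 + (a - b) + max (b - β) 0) :=
        mul_le_mul_of_nonneg_left hsplit' hm0
      have : m * (max (α - a) 0 + (a - b) + max (b - β) 0)
          = m * max (α - a) 0 + m * (a - b) + m * max (b - β) 0 := by ring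
      linarith
    · have e1 : max (b - α) 0 = 0 := max_eq_right (by linarith)
      have e2 : max (α - a) 0 = α - a := max_eq_left (by linarith)
      rw [e1, mul_zero] at hNl
      rw [e2] at hPl
      have hαa : 0 ≤ α - a := by linarith
      have s1 : m * (α - β) ≤ m * (α - a) :=
        mul_le_mul_of_nonneg_left (by linarith) hm0
      have s2 : m * (α - a) ≤ (A.card : ℝ) * (α - a) :=
        mul_le_mul_of_nonneg_right (by linarith) hαa
      linarith
  · have e2 : max (β - a) 0 = 0 := max_eq_right (by linarith)
    rw [e2, mul_zero] at hPBl
    have e3 : max (b - β) 0 = b - β := max_eq_left (by linarith)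
    rw [e3] at hNBl
    have hPN : P - N = NB - PB := by linarith
    have hbβ : 0 ≤ b - β := by linarith
    have s1 : m * (α - β) ≤ m * (b - β) :=
      mul_le_mul_of_nonneg_left (by linarith) hm0
    have s2 : m * (b - β) ≤ (B.card : ℝ) * (b - β) :=
      mul_le_mul_of_nonneg_right (by linarith) hbβ
    linarith

lemma abel_aux (X D : ℕ → ℝ) (hX : ∀ i, X (i+1) ≤ X i)
    (hD : ∀ i, 0 ≤ D i) (hD0 : D 0 = 0) (n : ℕ) :
    X n * D n ≤ ∑ i ∈ Finset.range n, X i * (D (i+1) - D i) := by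
  induction n with
  | zero => simp [hD0]
  | succ n ih =>
    rw [Finset.sum_range_succ]
    nlinarith [ih, mul_le_mul_of_nonneg_right (hX n) (hD (n+1))]

lemma cumVol_zero_aux {V : Type*} {n : ℕ} (σ : Fin n ≃ V) (d : V → ℝ) :
    cumVol σ d 0 = 0 := by
  simp [cumVol]

lemma cumVol_succ_aux {V : Type*} {n : ℕ} (σ : Fin n ≃ V) (d : V → ℝ) (t : ℕ) :
    cumVol σ d (t+1) = cumVol σ d t + (if h : t < n then d (σ ⟨t, h⟩) else 0) := by
  unfold cumVol
  rw [Finset.sum_filter, Finset.sum_filter]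
  by_cases h : t < n
  · rw [dif_pos h]
    have : ∀ i : Fin n, (if (i : ℕ) < t + 1 then d (σ i) else 0)
        = (if (i : ℕ) < t then d (σ i) else 0) + (if i = ⟨t, h⟩ then d (σ i) else 0) := by
      intro i
      rcases lt_trichotomy (i : ℕ) t with hi | hi | hi
      · rw [if_pos (by omega), if_pos hi, if_neg (by intro he; subst he; simp at hi)]
        ring
      · rw [if_pos (by omega), if_neg (by omega), if_pos (by exact Fin.ext (by simpa using hi))]
        ring
      · rw [if_neg (by omega), if_neg (by omega), if_neg (by intro he; subst he; simp at hi)]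
        ring
    rw [Finset.sum_congr rfl (fun i _ => this i), Finset.sum_add_distrib]
    congr 1
    rw [Finset.sum_ite_eq' univ (⟨t, h⟩ : Fin n) (fun i => d (σ i))]
    simp
  · rw [dif_neg h, add_zero]
    apply Finset.sum_congr rfl
    intro i _
    have hi : (i : ℕ) < n := i.isLt
    rw [if_pos (by omega), if_pos (by omega)]

lemma cumVol_mono_aux {V : Type*} {n : ℕ} (σ : Fin n ≃ V) (d : V → ℝ) (hd : ∀ v, 0 ≤ d v)
    {s t : ℕ} (h : s ≤ t) : cumVol σ d s ≤ cumVol σ d t := by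
  unfold cumVol
  apply Finset.sum_le_sum_of_subset_of_nonneg
  · intro i hi
    simp only [mem_filter, mem_univ, true_and] at hi ⊢
    omega
  · intro i _ _
    exact hd _

lemma chord_aux {V : Type*} [Fintype V] {n : ℕ} (σ : Fin n ≃ V) (d x y : V → ℝ)
    (hd : ∀ v, 0 ≤ d v) (hx0 : ∀ v, 0 ≤ x v)
    (hσ : ∀ i j : Fin n, i ≤ j → x (σ j) ≤ x (σ i))
    (hy0 : ∀ v, 0 ≤ y v) (hy1 : ∀ v, y v ≤ 1) (k : ℝ)
    (hk : ∑ v : V, d v * y v = k) :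
    ∑ v : V, x v * (d v * y v) ≤ LScurve σ d x k := by
  classical
  set X : ℕ → ℝ := fun i => if h : i < n then x (σ ⟨i, h⟩) else 0 with hX
  set w : ℕ → ℝ := fun i => if h : i < n then d (σ ⟨i, h⟩) * y (σ ⟨i, h⟩) else 0 with hw
  set W : ℕ → ℝ := fun t => ∑ i ∈ Finset.range t, w i with hW
  set D : ℕ → ℝ := fun t => min k (cumVol σ d t) - W t with hD
  have hk0 : 0 ≤ k := by
    rw [← hk]; exact Finset.sum_nonneg fun v _ => mul_nonneg (hd v) (hy0 v)
  have hw0 : ∀ i, 0 ≤ w i := by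
    intro i; rw [hw]; dsimp only
    split
    · exact mul_nonneg (hd _) (hy0 _)
    · exact le_rfl
  have hWn : W n = k := by
    rw [hW, ← hk]; dsimp only
    rw [← Fin.sum_univ_eq_sum_range w n]
    rw [← Equiv.sum_comp σ (fun v => d v * y v)]
    apply Finset.sum_congr rfl
    intro i _
    rw [hw]; simp [i.isLt]
  have hWk : ∀ t, W t ≤ k := by
    intro t
    rcases le_total t n with h | h
    · rw [← hWn, hW]
      exact Finset.sum_le_sum_of_subset_of_nonneg
        (Finset.range_subset_range.mpr h) (fun i _ _ => hw0 i)
    · rw [← hWn, hW]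
      have heq : ∑ i ∈ Finset.range t, w i = ∑ i ∈ Finset.range n, w i := by
        symm
        apply Finset.sum_subset (Finset.range_subset_range.mpr h)
        intro i _ hi
        rw [hw]
        have : ¬ (i < n) := by simp at hi; omega
        simp [this]
      dsimp only
      rw [heq]
  have hWC : ∀ t, W t ≤ cumVol σ d t := by
    intro t
    induction t with
    | zero => simp [hW, cumVol_zero_aux]
    | succ t ih =>
      have hWs : W (t+1) = W t + w t := by rw [hW]; exact Finset.sum_range_succ w t
      rw [hWs, cumVol_succ_aux]
      have : w t ≤ (if h : t < n then d (σ ⟨t, h⟩) else 0) := by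
        rw [hw]; dsimp only
        split
        · calc d (σ ⟨t, _⟩) * y (σ ⟨t, _⟩) ≤ d (σ ⟨t, _⟩) * 1 :=
              mul_le_mul_of_nonneg_left (hy1 _) (hd _)
          _ = _ := mul_one _
        · exact le_rfl
      linarith
  have hD0 : D 0 = 0 := by
    rw [hD]; dsimp only
    rw [cumVol_zero_aux, hW]
    simp [min_eq_right hk0]
  have hDpos : ∀ t, 0 ≤ D t := by
    intro t
    rw [hD]; dsimp only
    rw [le_sub_iff_add_le, zero_add, le_min_iff]
    exact ⟨hWk t, hWC t⟩
  have hXd : ∀ i, X (i+1) ≤ X i := by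
    intro i
    rw [hX]; dsimp only
    by_cases h1 : i + 1 < n
    · rw [dif_pos h1, dif_pos (by omega)]
      exact hσ _ _ (by simp [Fin.le_def])
    · rw [dif_neg h1]
      split
      · exact hx0 _
      · exact le_rfl
  have habel := abel_aux X D hXd hDpos hD0 n
  have hXn : X n = 0 := by rw [hX]; simp
  rw [hXn, zero_mul] at habel
  have hsplit' : ∀ i, X i * (D (i+1) - D i)
      = X i * (min k (cumVol σ d (i+1)) - min k (cumVol σ d i)) - X i * w i := by
    intro i
    rw [hD, hW]; dsimp only
    rw [Finset.sum_range_succ]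
    ring
  rw [Finset.sum_congr rfl (fun i _ => hsplit' i), Finset.sum_sub_distrib] at habel
  have h1 : ∑ i ∈ Finset.range n, X i * (min k (cumVol σ d (i+1)) - min k (cumVol σ d i))
      = LScurve σ d x k := by
    unfold LScurve
    rw [← Fin.sum_univ_eq_sum_range
      (fun i => X i * (min k (cumVol σ d (i+1)) - min k (cumVol σ d i))) n]
    apply Finset.sum_congr rfl
    intro i _
    rw [hX]; simp [i.isLt]
  have h2 : ∑ i ∈ Finset.range n, X i * w i = ∑ v : V, x v * (d v * y v) := by
    rw [← Fin.sum_univ_eq_sum_range (fun i => X i * w i) n]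
    rw [← Equiv.sum_comp σ (fun v => x v * (d v * y v))]
    apply Finset.sum_congr rfl
    intro i _
    rw [hX, hw]; simp [i.isLt]
  rw [h1, h2] at habel
  linarith

lemma breakpoint_aux {V : Type*} [Fintype V] [DecidableEq V] {n : ℕ} (σ : Fin n ≃ V)
    (d x : V → ℝ) (hd : ∀ v, 0 ≤ d v) (j : ℕ) :
    LScurve σ d x (cumVol σ d j) = ∑ v ∈ sweepSet σ j, x v * d v := by
  classical
  unfold LScurve
  have hterm : ∀ i : Fin n,
      x (σ i) * (min (cumVol σ d j) (cumVol σ d ((i:ℕ)+1)) - min (cumVol σ d j) (cumVol σ d (i:ℕ)))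
      = if (i : ℕ) < j then x (σ i) * d (σ i) else 0 := by
    intro i
    by_cases h : (i : ℕ) < j
    · rw [if_pos h]
      have h1 : min (cumVol σ d j) (cumVol σ d ((i:ℕ)+1)) = cumVol σ d ((i:ℕ)+1) :=
        min_eq_right (cumVol_mono_aux σ d hd (by omega))
      have h2 : min (cumVol σ d j) (cumVol σ d (i:ℕ)) = cumVol σ d (i:ℕ) :=
        min_eq_right (cumVol_mono_aux σ d hd (by omega))
      rw [h1, h2, cumVol_succ_aux, dif_pos i.isLt]
      simp
    · rw [if_neg h]
      have h1 : min (cumVol σ d j) (cumVol σ d ((i:ℕ)+1)) = cumVol σ d j :=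
        min_eq_left (cumVol_mono_aux σ d hd (by omega))
      have h2 : min (cumVol σ d j) (cumVol σ d (i:ℕ)) = cumVol σ d j :=
        min_eq_left (cumVol_mono_aux σ d hd (by omega))
      rw [h1, h2]
      ring
  rw [Finset.sum_congr rfl (fun i _ => hterm i), Finset.sum_ite, Finset.sum_const_zero, add_zero]
  unfold sweepSet
  rw [Finset.sum_image (fun i _ i' _ h => σ.injective h)]

section HBasics
variable {V E : Type*} [Fintype E] [DecidableEq V] (e : E → Finset V) (δe : E → ℝ)

omit [Fintype E] in
lemma hsplit_nonneg (hδe : ∀ ε, 1 ≤ δe ε) (ε : E) (S : Finset V) :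
    0 ≤ hsplit e δe ε S := by
  unfold hsplit
  refine le_min (le_min ?_ ?_) (by linarith [hδe ε]) <;> positivity

omit [Fintype E] in
lemma hsplit_le_inter (ε : E) (S : Finset V) :
    hsplit e δe ε S ≤ ((e ε ∩ S).card : ℝ) :=
  le_trans (min_le_left _ _) (min_le_left _ _)

omit [Fintype E] in
lemma hsplit_le_diff (ε : E) (S : Finset V) :
    hsplit e δe ε S ≤ ((e ε \ S).card : ℝ) :=
  le_trans (min_le_left _ _) (min_le_right _ _)

omit [Fintype E] in
lemma hsplit_le_delta (ε : E) (S : Finset V) : hsplit e δe ε S ≤ δe ε :=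
  min_le_right _ _

omit [Fintype E] in
lemma hsplit_zero (hδe : ∀ ε, 1 ≤ δe ε) (ε : E) (S : Finset V)
    (h : ¬((e ε ∩ S).Nonempty ∧ (e ε \ S).Nonempty)) : hsplit e δe ε S = 0 := by
  have h0 : 0 ≤ hsplit e δe ε S := hsplit_nonneg e δe hδe ε S
  rcases not_and_or.mp h with h1 | h1
  · have hc : (e ε ∩ S).card = 0 := by
      rw [Finset.card_eq_zero]; exact Finset.not_nonempty_iff_eq_empty.mp h1
    have h2 := hsplit_le_inter e δe ε S
    rw [hc] at h2; push_cast at h2; linarith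
  · have hc : (e ε \ S).card = 0 := by
      rw [Finset.card_eq_zero]; exact Finset.not_nonempty_iff_eq_empty.mp h1
    have h2 := hsplit_le_diff e δe ε S
    rw [hc] at h2; push_cast at h2; linarith

omit [Fintype E] in
lemma hsplit_single (hcard : ∀ ε, 2 ≤ (e ε).card) (hδe : ∀ ε, 1 ≤ δe ε)
    (ε : E) {v : V} (hv : v ∈ e ε) : hsplit e δe ε {v} = 1 := by
  unfold hsplit
  have h1 : e ε ∩ {v} = {v} := by
    apply Finset.inter_eq_right.mpr; simp [hv]
  have h2 : (e ε \ {v}).card = (e ε).card - 1 := by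
    rw [Finset.card_sdiff_of_subset (by simp [hv])]; simp
  rw [h1, h2, Finset.card_singleton]
  have hge : (1:ℝ) ≤ ((e ε).card - 1 : ℕ) := by
    have : 1 ≤ (e ε).card - 1 := by have := hcard ε; omega
    exact_mod_cast this
  push_cast
  rw [min_eq_left hge, min_eq_left (hδe ε)]

lemma hdeg_count (hcard : ∀ ε, 2 ≤ (e ε).card) (hδe : ∀ ε, 1 ≤ δe ε) (v : V) :
    hdeg e δe v = ∑ ε : E, (if v ∈ e ε then (1:ℝ) else 0) := by
  unfold hdeg
  rw [Finset.sum_filter]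
  apply Finset.sum_congr rfl
  intro ε _
  by_cases h : v ∈ e ε
  · rw [if_pos h, if_pos h, hsplit_single e δe hcard hδe ε h]
  · rw [if_neg h, if_neg h]

lemma hdeg_one (hcard : ∀ ε, 2 ≤ (e ε).card) (hδe : ∀ ε, 1 ≤ δe ε)
    (hcov : ∀ v : V, ∃ ε, v ∈ e ε) (v : V) : 1 ≤ hdeg e δe v := by
  rw [hdeg_count e δe hcard hδe v]
  obtain ⟨ε0, hε0⟩ := hcov v
  calc (1:ℝ) = ∑ ε ∈ {ε0}, (if v ∈ e ε then (1:ℝ) else 0) := by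
        rw [Finset.sum_singleton, if_pos hε0]
    _ ≤ ∑ ε : E, (if v ∈ e ε then (1:ℝ) else 0) := by
        apply Finset.sum_le_sum_of_subset_of_nonneg (Finset.subset_univ _)
        intro i _ _; positivity

lemma hvol_eq (hcard : ∀ ε, 2 ≤ (e ε).card) (hδe : ∀ ε, 1 ≤ δe ε) (S : Finset V) :
    hvol e δe S = ∑ ε : E, ((e ε ∩ S).card : ℝ) := by
  unfold hvol
  rw [Finset.sum_congr rfl (fun v _ => hdeg_count e δe hcard hδe v), Finset.sum_comm]
  apply Finset.sum_congr rfl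
  intro ε _
  rw [Finset.sum_ite_mem, Finset.inter_comm, Finset.sum_const, Finset.inter_comm]
  simp

lemma hM_eq [Fintype V] (hcard : ∀ ε, 2 ≤ (e ε).card) (hδe : ∀ ε, 1 ≤ δe ε) :
    hM e δe = ∑ ε : E, ((e ε).card : ℝ) := by
  unfold hM
  rw [hvol_eq e δe hcard hδe]
  simp

end HBasics
end AuxLemmas

open Finset in
/-- Lovász–Simonovits diffusion lemma (Lemma `lm:diffusion`): for nonnegative `x` and
per-hyperedge optimal auxiliary values `(a_ε, b_ε)` of the inner gadget problem,
every sweep set `S_j` with `0 < vol(S_j) < M` satisfies, with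
`σ_j = (1 + 2 δ̄(S_j))⁻¹` (so `σ_j = 1` when `∂S_j = ∅`), that
`vol(S_j) ± σ_j cut(S_j) ∈ [0,M]` and
`2 I_x(vol S_j) − Σ_ε Σ_{v∈S_j} L_ε(x)_v ≤ I_x(vol S_j − σ_j cut S_j) + I_x(vol S_j + σ_j cut S_j)`. -/
theorem ls_diffusion_lemma {V E : Type*} [Fintype V] [Fintype E] [DecidableEq V]
    (e : E → Finset V) (δe : E → ℝ)
    (hcard : ∀ ε, 2 ≤ (e ε).card) (hδe : ∀ ε, 1 ≤ δe ε)
    (hcov : ∀ v : V, ∃ ε, v ∈ e ε)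
    (x : V → ℝ) (hx0 : ∀ v, 0 ≤ x v)
    (a b : E → ℝ)
    (hab : ∀ ε : E, ∀ a' b' : ℝ, innerQ e δe ε x (a ε) (b ε) ≤ innerQ e δe ε x a' b')
    (σ : Fin (Fintype.card V) ≃ V)
    (hσ : ∀ i j : Fin (Fintype.card V), i ≤ j → x (σ j) ≤ x (σ i))
    (j : ℕ) (hj : j ≤ Fintype.card V)
    (hj0 : 0 < hvol e δe (sweepSet σ j))
    (hjM : hvol e δe (sweepSet σ j) < hM e δe) :
    hvol e δe (sweepSet σ j) -
        (1 + 2 * deltaBar e δe (sweepSet σ j))⁻¹ * hcut e δe (sweepSet σ j) ∈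
      Set.Icc 0 (hM e δe) ∧
    hvol e δe (sweepSet σ j) +
        (1 + 2 * deltaBar e δe (sweepSet σ j))⁻¹ * hcut e δe (sweepSet σ j) ∈
      Set.Icc 0 (hM e δe) ∧
    2 * LScurve σ (hdeg e δe) x (hvol e δe (sweepSet σ j)) -
        ∑ ε : E, ∑ v ∈ sweepSet σ j ∩ e ε, (max (x v - a ε) 0 - max (b ε - x v) 0) ≤
      LScurve σ (hdeg e δe) x
          (hvol e δe (sweepSet σ j) -
            (1 + 2 * deltaBar e δe (sweepSet σ j))⁻¹ * hcut e δe (sweepSet σ j)) +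
        LScurve σ (hdeg e δe) x
          (hvol e δe (sweepSet σ j) +
            (1 + 2 * deltaBar e δe (sweepSet σ j))⁻¹ * hcut e δe (sweepSet σ j)) := by
  classical
  set S : Finset V := sweepSet σ j with hSdef
  have hd0 : ∀ v, 0 ≤ hdeg e δe v :=
    fun v => le_trans zero_le_one (hdeg_one e δe hcard hδe hcov v)
  have hd1 : ∀ v, 1 ≤ hdeg e δe v := hdeg_one e δe hcard hδe hcov
  have hcut0 : 0 ≤ hcut e δe S := Finset.sum_nonneg fun ε _ => hsplit_nonneg e δe hδe ε S
  have hcutvol : hcut e δe S ≤ hvol e δe S := by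
    rw [hvol_eq e δe hcard hδe]
    exact Finset.sum_le_sum fun ε _ => hsplit_le_inter e δe ε S
  have hcompl : hcut e δe S ≤ hM e δe - hvol e δe S := by
    have h1 : hM e δe - hvol e δe S = ∑ ε : E, ((e ε \ S).card : ℝ) := by
      rw [hM_eq e δe hcard hδe, hvol_eq e δe hcard hδe, ← Finset.sum_sub_distrib]
      apply Finset.sum_congr rfl
      intro ε _
      have h2 := congrArg (Nat.cast : ℕ → ℝ) (Finset.card_inter_add_card_sdiff (e ε) S)
      push_cast at h2
      linarith
    rw [h1]
    exact Finset.sum_le_sum fun ε _ => hsplit_le_diff e δe ε S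
  set Db := deltaBar e δe S with hDb
  have hbdd : BddAbove ((fun ε => min (δe ε) (((e ε).card : ℝ)/2)) '' hbdry e S) :=
    (Set.toFinite _).bddAbove
  have hDmem : ∀ ε : E, (e ε ∩ S).Nonempty → (e ε \ S).Nonempty →
      min (δe ε) (((e ε).card : ℝ)/2) ≤ Db :=
    fun ε h1 h2 => le_csSup hbdd ⟨ε, ⟨h1, h2⟩, rfl⟩
  have hminge1 : ∀ ε : E, (1:ℝ) ≤ min (δe ε) (((e ε).card : ℝ)/2) := by
    intro ε
    refine le_min (hδe ε) ?_
    have h2 : (2:ℝ) ≤ ((e ε).card : ℝ) := by exact_mod_cast hcard ε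
    linarith
  have hDb0 : 0 ≤ Db := by
    rcases Set.eq_empty_or_nonempty (hbdry e S) with hbe | ⟨ε, hε⟩
    · rw [hDb]; unfold deltaBar; rw [hbe]; simp [Real.sSup_empty]
    · exact le_trans (by linarith [hminge1 ε]) (hDmem ε hε.1 hε.2)
  have h12 : (0:ℝ) < 1 + 2 * Db := by linarith
  set sj : ℝ := (1 + 2 * Db)⁻¹ with hsj
  have hsj0 : 0 < sj := inv_pos.mpr h12
  have hsj1 : sj ≤ 1 := by
    rw [hsj]
    have hmul : (1 + 2*Db)⁻¹ * (1 + 2*Db) = 1 := inv_mul_cancel₀ (ne_of_gt h12)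
    nlinarith [inv_pos.mpr h12]
  have hc0 : 0 ≤ sj * hcut e δe S := mul_nonneg hsj0.le hcut0
  have hc_le : sj * hcut e δe S ≤ hcut e δe S := by nlinarith
  have hvolM : hvol e δe S ≤ hM e δe := le_of_lt hjM
  refine ⟨Set.mem_Icc.mpr ⟨by linarith, by linarith⟩,
    Set.mem_Icc.mpr ⟨by linarith, by linarith⟩, ?_⟩
  -- main inequality
  have hSne : S.Nonempty := by
    rw [Finset.nonempty_iff_ne_empty]
    intro hco
    rw [hco] at hj0
    unfold hvol at hj0
    simp at hj0
  obtain ⟨v0, hv0⟩ := hSne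
  have hcross : ∀ v ∈ S, ∀ w, w ∉ S → x w ≤ x v := by
    intro v hv w hw
    rw [hSdef] at hv hw
    obtain ⟨i, hi, hiv⟩ := Finset.mem_image.mp hv
    simp only [Finset.mem_filter, Finset.mem_univ, true_and] at hi
    have hwi : σ (σ.symm w) = w := σ.apply_symm_apply w
    have hni : ¬ ((σ.symm w : ℕ) < j) := by
      intro hlt
      exact hw (Finset.mem_image.mpr ⟨σ.symm w,
        Finset.mem_filter.mpr ⟨Finset.mem_univ _, hlt⟩, hwi⟩)
    have hle : i ≤ σ.symm w := by
      rw [Fin.le_def]; omega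
    rw [← hiv, ← hwi]
    exact hσ i (σ.symm w) hle
  have hpick : ∀ ε : E, ∃ pq : V × V, ((e ε ∩ S).Nonempty ∧ (e ε \ S).Nonempty) →
      (pq.1 ∈ e ε ∩ S ∧ (∀ v ∈ e ε ∩ S, x pq.1 ≤ x v) ∧
       pq.2 ∈ e ε \ S ∧ (∀ v ∈ e ε \ S, x v ≤ x pq.2)) := by
    intro ε
    by_cases hbd : (e ε ∩ S).Nonempty ∧ (e ε \ S).Nonempty
    · obtain ⟨v1, hv1, hv1m⟩ := Finset.exists_min_image (e ε ∩ S) x hbd.1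
      obtain ⟨v2, hv2, hv2m⟩ := Finset.exists_max_image (e ε \ S) x hbd.2
      exact ⟨(v1, v2), fun _ => ⟨hv1, hv1m, hv2, hv2m⟩⟩
    · exact ⟨(v0, v0), fun h => absurd h hbd⟩
  choose p hp using hpick
  set mB : E → ℝ := fun ε => sj * hsplit e δe ε S with hmB
  have hmB0 : ∀ ε, 0 ≤ mB ε := fun ε => mul_nonneg hsj0.le (hsplit_nonneg e δe hδe ε S)
  have hmBz : ∀ ε, ¬((e ε ∩ S).Nonempty ∧ (e ε \ S).Nonempty) → mB ε = 0 := by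
    intro ε h
    rw [hmB]; dsimp only
    rw [hsplit_zero e δe hδe ε S h, mul_zero]
  have hfhalf : ∀ ε : E, (e ε ∩ S).Nonempty → (e ε \ S).Nonempty →
      hsplit e δe ε S ≤ Db := by
    intro ε hb1 hb2
    refine le_trans ?_ (hDmem ε hb1 hb2)
    refine le_min (hsplit_le_delta e δe ε S) ?_
    have h1 := hsplit_le_inter e δe ε S
    have h2 := hsplit_le_diff e δe ε S
    have h3 := congrArg (Nat.cast : ℕ → ℝ) (Finset.card_inter_add_card_sdiff (e ε) S)
    push_cast at h3
    linarith
  have hmB1 : ∀ ε, mB ε ≤ 1 := by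
    intro ε
    by_cases hbd : (e ε ∩ S).Nonempty ∧ (e ε \ S).Nonempty
    · have hfd := hfhalf ε hbd.1 hbd.2
      have hle : hsplit e δe ε S ≤ 1 + 2*Db := by linarith
      rw [hmB]; dsimp only
      rw [hsj]
      calc (1+2*Db)⁻¹ * hsplit e δe ε S ≤ (1+2*Db)⁻¹ * (1+2*Db) :=
            mul_le_mul_of_nonneg_left hle (inv_pos.mpr h12).le
        _ = 1 := inv_mul_cancel₀ (ne_of_gt h12)
    · rw [hmBz ε hbd]; norm_num
  set U : V → ℝ := fun v => ∑ ε : E, (if v = (p ε).1 then mB ε else 0) with hU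
  set Wp : V → ℝ := fun v => ∑ ε : E, (if v = (p ε).2 then mB ε else 0) with hWp
  have hU0 : ∀ v, 0 ≤ U v := by
    intro v; rw [hU]; dsimp only
    apply Finset.sum_nonneg
    intro ε _
    split
    · exact hmB0 ε
    · exact le_rfl
  have hWp0 : ∀ v, 0 ≤ Wp v := by
    intro v; rw [hWp]; dsimp only
    apply Finset.sum_nonneg
    intro ε _
    split
    · exact hmB0 ε
    · exact le_rfl
  have hUd : ∀ v, U v ≤ hdeg e δe v := by
    intro v
    rw [hdeg_count e δe hcard hδe v, hU]; dsimp only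
    apply Finset.sum_le_sum
    intro ε _
    by_cases h1 : v = (p ε).1
    · rw [if_pos h1]
      by_cases hbd : (e ε ∩ S).Nonempty ∧ (e ε \ S).Nonempty
      · have hin := (hp ε hbd).1
        have hv : v ∈ e ε := by rw [h1]; exact (Finset.mem_inter.mp hin).1
        rw [if_pos hv]; exact hmB1 ε
      · rw [hmBz ε hbd]
        split <;> norm_num
    · rw [if_neg h1]
      split <;> norm_num
  have hWpd : ∀ v, Wp v ≤ hdeg e δe v := by
    intro v
    rw [hdeg_count e δe hcard hδe v, hWp]; dsimp only
    apply Finset.sum_le_sum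
    intro ε _
    by_cases h1 : v = (p ε).2
    · rw [if_pos h1]
      by_cases hbd : (e ε ∩ S).Nonempty ∧ (e ε \ S).Nonempty
      · have hin := (hp ε hbd).2.2.1
        have hv : v ∈ e ε := by rw [h1]; exact (Finset.mem_sdiff.mp hin).1
        rw [if_pos hv]; exact hmB1 ε
      · rw [hmBz ε hbd]
        split <;> norm_num
    · rw [if_neg h1]
      split <;> norm_num
  have hUout : ∀ v, v ∉ S → U v = 0 := by
    intro v hv
    rw [hU]; dsimp only
    apply Finset.sum_eq_zero
    intro ε _
    by_cases hbd : (e ε ∩ S).Nonempty ∧ (e ε \ S).Nonempty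
    · have hne : v ≠ (p ε).1 := by
        intro h1
        exact hv (h1 ▸ (Finset.mem_inter.mp (hp ε hbd).1).2)
      rw [if_neg hne]
    · rw [hmBz ε hbd]
      split <;> rfl
  have hWpin : ∀ v, v ∈ S → Wp v = 0 := by
    intro v hv
    rw [hWp]; dsimp only
    apply Finset.sum_eq_zero
    intro ε _
    by_cases hbd : (e ε ∩ S).Nonempty ∧ (e ε \ S).Nonempty
    · have hne : v ≠ (p ε).2 := by
        intro h1
        exact (Finset.mem_sdiff.mp (hp ε hbd).2.2.1).2 (h1 ▸ hv)
      rw [if_neg hne]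
    · rw [hmBz ε hbd]
      split <;> rfl
  set ym : V → ℝ := fun v => (if v ∈ S then (1:ℝ) else 0) - U v / hdeg e δe v with hym
  set yp : V → ℝ := fun v => (if v ∈ S then (1:ℝ) else 0) + Wp v / hdeg e δe v with hyp
  have hdpos : ∀ v, 0 < hdeg e δe v := fun v => lt_of_lt_of_le one_pos (hd1 v)
  have hdne : ∀ v, hdeg e δe v ≠ 0 := fun v => ne_of_gt (hdpos v)
  have hym0 : ∀ v, 0 ≤ ym v := by
    intro v; rw [hym]; dsimp only
    by_cases hv : v ∈ S
    · rw [if_pos hv]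
      have hle : U v / hdeg e δe v ≤ 1 := by
        rw [div_le_one (hdpos v)]
        exact hUd v
      linarith
    · rw [if_neg hv, hUout v hv]
      simp
  have hym1 : ∀ v, ym v ≤ 1 := by
    intro v; rw [hym]; dsimp only
    have h1 : 0 ≤ U v / hdeg e δe v := div_nonneg (hU0 v) (hd0 v)
    split <;> linarith
  have hyp0 : ∀ v, 0 ≤ yp v := by
    intro v; rw [hyp]; dsimp only
    have h1 : 0 ≤ Wp v / hdeg e δe v := div_nonneg (hWp0 v) (hd0 v)
    split <;> linarith
  have hyp1 : ∀ v, yp v ≤ 1 := by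
    intro v; rw [hyp]; dsimp only
    by_cases hv : v ∈ S
    · rw [if_pos hv, hWpin v hv]
      simp
    · rw [if_neg hv]
      have hle : Wp v / hdeg e δe v ≤ 1 := by
        rw [div_le_one (hdpos v)]
        exact hWpd v
      linarith
  have hsum_ind : ∑ v : V, hdeg e δe v * (if v ∈ S then (1:ℝ) else 0) = hvol e δe S := by
    rw [Finset.sum_congr rfl (fun v _ => by rw [mul_ite, mul_one, mul_zero])]
    rw [Finset.sum_ite_mem, Finset.univ_inter]
    rfl
  have hUsum : ∑ v : V, U v = sj * hcut e δe S := by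
    rw [hU]; dsimp only
    rw [Finset.sum_comm]
    have h1 : ∀ ε : E, ∑ v : V, (if v = (p ε).1 then mB ε else 0) = mB ε := by
      intro ε
      rw [Finset.sum_ite_eq' Finset.univ ((p ε).1) (fun _ => mB ε)]
      simp
    rw [Finset.sum_congr rfl (fun ε _ => h1 ε), hmB]
    rw [← Finset.mul_sum]
    rfl
  have hWpsum : ∑ v : V, Wp v = sj * hcut e δe S := by
    rw [hWp]; dsimp only
    rw [Finset.sum_comm]
    have h1 : ∀ ε : E, ∑ v : V, (if v = (p ε).2 then mB ε else 0) = mB ε := by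
      intro ε
      rw [Finset.sum_ite_eq' Finset.univ ((p ε).2) (fun _ => mB ε)]
      simp
    rw [Finset.sum_congr rfl (fun ε _ => h1 ε), hmB]
    rw [← Finset.mul_sum]
    rfl
  have hxU : ∑ v : V, x v * U v = ∑ ε : E, mB ε * x ((p ε).1) := by
    rw [hU]; dsimp only
    rw [Finset.sum_congr rfl (fun v _ => Finset.mul_sum _ _ _), Finset.sum_comm]
    apply Finset.sum_congr rfl
    intro ε _
    rw [Finset.sum_congr rfl (fun v _ => by rw [mul_ite, mul_zero])]
    rw [Finset.sum_ite_eq' Finset.univ ((p ε).1) (fun v => x v * mB ε)]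
    simp [mul_comm]
  have hxWp : ∑ v : V, x v * Wp v = ∑ ε : E, mB ε * x ((p ε).2) := by
    rw [hWp]; dsimp only
    rw [Finset.sum_congr rfl (fun v _ => Finset.mul_sum _ _ _), Finset.sum_comm]
    apply Finset.sum_congr rfl
    intro ε _
    rw [Finset.sum_congr rfl (fun v _ => by rw [mul_ite, mul_zero])]
    rw [Finset.sum_ite_eq' Finset.univ ((p ε).2) (fun v => x v * mB ε)]
    simp [mul_comm]
  have hdU : ∀ v, hdeg e δe v * (U v / hdeg e δe v) = U v := by
    intro v
    rw [mul_comm, div_mul_cancel₀ _ (hdne v)]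
  have hdWp : ∀ v, hdeg e δe v * (Wp v / hdeg e δe v) = Wp v := by
    intro v
    rw [mul_comm, div_mul_cancel₀ _ (hdne v)]
  have hkm : ∑ v : V, hdeg e δe v * ym v = hvol e δe S - sj * hcut e δe S := by
    rw [hym]; dsimp only
    rw [Finset.sum_congr rfl (fun v _ => by rw [mul_sub, hdU v])]
    rw [Finset.sum_sub_distrib, hsum_ind, hUsum]
  have hkp : ∑ v : V, hdeg e δe v * yp v = hvol e δe S + sj * hcut e δe S := by
    rw [hyp]; dsimp only
    rw [Finset.sum_congr rfl (fun v _ => by rw [mul_add, hdWp v])]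
    rw [Finset.sum_add_distrib, hsum_ind, hWpsum]
  have hxind : ∑ v : V, x v * (hdeg e δe v * (if v ∈ S then (1:ℝ) else 0))
      = ∑ v ∈ S, x v * hdeg e δe v := by
    rw [Finset.sum_congr rfl
      (fun v _ => by rw [mul_ite, mul_one, mul_zero, mul_ite, mul_zero])]
    rw [Finset.sum_ite_mem, Finset.univ_inter]
  have hxym : ∑ v : V, x v * (hdeg e δe v * ym v)
      = (∑ v ∈ S, x v * hdeg e δe v) - ∑ ε : E, mB ε * x ((p ε).1) := by
    rw [hym]; dsimp only
    rw [Finset.sum_congr rfl (fun v _ => by rw [mul_sub, hdU v, mul_sub])]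
    rw [Finset.sum_sub_distrib, hxU, hxind]
  have hxyp : ∑ v : V, x v * (hdeg e δe v * yp v)
      = (∑ v ∈ S, x v * hdeg e δe v) + ∑ ε : E, mB ε * x ((p ε).2) := by
    rw [hyp]; dsimp only
    rw [Finset.sum_congr rfl (fun v _ => by rw [mul_add, hdWp v, mul_add])]
    rw [Finset.sum_add_distrib, hxWp, hxind]
  have hchord1 := chord_aux σ (hdeg e δe) x ym hd0 hx0 hσ hym0 hym1 _ hkm
  have hchord2 := chord_aux σ (hdeg e δe) x yp hd0 hx0 hσ hyp0 hyp1 _ hkp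
  rw [hxym] at hchord1
  rw [hxyp] at hchord2
  have hvolcum : hvol e δe S = cumVol σ (hdeg e δe) j := by
    rw [hSdef]
    unfold hvol sweepSet cumVol
    rw [Finset.sum_image (fun i _ i' _ h => σ.injective h)]
  have hbp : LScurve σ (hdeg e δe) x (hvol e δe S) = ∑ v ∈ S, x v * hdeg e δe v := by
    rw [hvolcum, breakpoint_aux σ (hdeg e δe) x hd0 j]
  have hpe : ∀ ε : E, mB ε * x ((p ε).1) - mB ε * x ((p ε).2) ≤
      ∑ v ∈ S ∩ e ε, (max (x v - a ε) 0 - max (b ε - x v) 0) := by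
    intro ε
    have hst := stationary_aux e δe ε (hδe ε) x (a ε) (b ε) (hab ε)
    by_cases hbd : (e ε ∩ S).Nonempty ∧ (e ε \ S).Nonempty
    · obtain ⟨hp1, hp1m, hp2, hp2m⟩ := hp ε hbd
      have hst1 : (∑ v ∈ e ε ∩ S, max (x v - a ε) 0) + (∑ v ∈ e ε \ S, max (x v - a ε) 0)
          = δe ε * max (a ε - b ε) 0 := by
        rw [Finset.sum_inter_add_sum_sdiff]; exact hst.1
      have hst2 : (∑ v ∈ e ε ∩ S, max (b ε - x v) 0) + (∑ v ∈ e ε \ S, max (b ε - x v) 0)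
          = δe ε * max (a ε - b ε) 0 := by
        rw [Finset.sum_inter_add_sum_sdiff]; exact hst.2
      have hDb1 : (1:ℝ) ≤ Db := le_trans (hminge1 ε) (hDmem ε hbd.1 hbd.2)
      have h3 : (3:ℝ) ≤ 1 + 2*Db := by linarith
      have hsj3 : 3 * sj ≤ 1 := by
        have hinv : sj ≤ 3⁻¹ := by
          rw [hsj]
          exact inv_anti₀ (by norm_num) h3
        linarith
      have hf0 : 0 ≤ hsplit e δe ε S := hsplit_nonneg e δe hδe ε S
      have h3A : 3 * mB ε ≤ ((e ε ∩ S).card : ℝ) := by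
        have h1 := hsplit_le_inter e δe ε S
        rw [hmB]; dsimp only
        calc 3 * (sj * hsplit e δe ε S) = (3 * sj) * hsplit e δe ε S := by ring
          _ ≤ 1 * hsplit e δe ε S := mul_le_mul_of_nonneg_right hsj3 hf0
          _ = hsplit e δe ε S := one_mul _
          _ ≤ ((e ε ∩ S).card : ℝ) := h1
      have h3B : 3 * mB ε ≤ ((e ε \ S).card : ℝ) := by
        have h1 := hsplit_le_diff e δe ε S
        rw [hmB]; dsimp only
        calc 3 * (sj * hsplit e δe ε S) = (3 * sj) * hsplit e δe ε S := by ring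
          _ ≤ 1 * hsplit e δe ε S := mul_le_mul_of_nonneg_right hsj3 hf0
          _ = hsplit e δe ε S := one_mul _
          _ ≤ ((e ε \ S).card : ℝ) := h1
      have h3δ : 3 * mB ε ≤ δe ε := by
        have h1 := hsplit_le_delta e δe ε S
        rw [hmB]; dsimp only
        calc 3 * (sj * hsplit e δe ε S) = (3 * sj) * hsplit e δe ε S := by ring
          _ ≤ 1 * hsplit e δe ε S := mul_le_mul_of_nonneg_right hsj3 hf0
          _ = hsplit e δe ε S := one_mul _
          _ ≤ δe ε := h1
      have hcr : x ((p ε).2) ≤ x ((p ε).1) :=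
        hcross _ (Finset.mem_inter.mp hp1).2 _ (Finset.mem_sdiff.mp hp2).2
      have hkey := per_edge_aux (e ε ∩ S) (e ε \ S) x (a ε) (b ε) (δe ε) (mB ε)
        hst1 hst2 (hmB0 ε) h3A h3B h3δ hp1 hp1m hp2 hp2m hcr
      rw [Finset.inter_comm]
      have hexp : mB ε * (x ((p ε).1) - x ((p ε).2))
          = mB ε * x ((p ε).1) - mB ε * x ((p ε).2) := by ring
      linarith
    · rw [hmBz ε hbd]
      rw [zero_mul, zero_mul, sub_zero]
      rcases not_and_or.mp hbd with h1 | h1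
      · have hco : e ε ∩ S = ∅ := Finset.not_nonempty_iff_eq_empty.mp h1
        rw [Finset.inter_comm, hco, Finset.sum_empty]
      · have h2 : e ε \ S = ∅ := Finset.not_nonempty_iff_eq_empty.mp h1
        have hsub : e ε ⊆ S := by
          intro v hv
          by_contra hns
          exact (Finset.notMem_empty v) (h2 ▸ Finset.mem_sdiff.mpr ⟨hv, hns⟩)
        have hse : S ∩ e ε = e ε := by
          rw [Finset.inter_comm]
          exact Finset.inter_eq_left.mpr hsub
        rw [hse, Finset.sum_sub_distrib, hst.1, hst.2, sub_self]
  have hsum_pe := Finset.sum_le_sum (fun ε (_ : ε ∈ Finset.univ) => hpe ε)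
  rw [Finset.sum_sub_distrib] at hsum_pe
  rw [hbp]
  linarith [hchord1, hchord2, hsum_pe]
end

section
/- Let H = (V,𝓔) be a hypergraph as above, let S ⊆ V with vol(S) > 0, γ > 0, let x = x(γ,S) be the minimizer of Q, and let x₀ = 1_S/vol(S) ∈ ℝ^V. Then for every sweep set S_j^x with 0 < vol(S_j^x) < M, with σ_j = ( 1 + 2 max_{e∈∂S_j^x} min{δ_e, |e|/2} )^{-1} (and σ_j = 1 if ∂S_j^x = ∅), I_x(vol(S_j^x)) ≤ (γ/(2+γ)) I_{x₀}(vol(S_j^x)) + (1/(2+γ)) [ I_x( vol(S_j^x) − σ_j cut_H(S_j^x) ) + I_x( vol(S_j^x) + σ_j cut_H(S_j^x) ) ]. Moreover, I_x(k) ≤ I_{x₀}(k) for every k ∈ [0, M]. -/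
open Finset

namespace LSaux
open Finset
set_option linter.unusedSectionVars false
set_option linter.unnecessarySimpa false


noncomputable def trunc (β t : ℝ) : ℝ := min β (max t 0)

lemma trunc_mono {β : ℝ} : Monotone (trunc β) :=
  fun _ _ h => min_le_min le_rfl (max_le_max h le_rfl)

lemma trunc_fix {β t : ℝ} (h0 : 0 ≤ t) (h1 : t ≤ β) : trunc β t = t := by
  unfold trunc; rw [max_eq_left h0, min_eq_right h1]

lemma trunc_mem {β t : ℝ} (hβ : 0 ≤ β) : 0 ≤ trunc β t ∧ trunc β t ≤ β :=
  ⟨le_min hβ (le_max_right _ _), min_le_left _ _⟩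

lemma min_sub_le' {β r s : ℝ} (h : r ≤ s) : min β s - min β r ≤ s - r := by
  rcases le_total β r with hb | hb
  · have h1 : min β s ≤ β := min_le_left _ _
    rw [min_eq_left hb]; linarith
  · rw [min_eq_right hb]
    have h1 : min β s ≤ s := min_le_right _ _
    linarith

lemma max0_sub_le {r s : ℝ} (h : r ≤ s) : max s 0 - max r 0 ≤ s - r := by
  have h1 : r ≤ max r 0 := le_max_left _ _
  have h2 : (0:ℝ) ≤ max r 0 := le_max_right _ _
  have h3 : max s 0 ≤ s - r + max r 0 :=
    max_le (by linarith) (by linarith)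
  linarith

lemma trunc_sub_le {β r s : ℝ} (h : r ≤ s) : trunc β s - trunc β r ≤ s - r := by
  have h1 : trunc β s - trunc β r ≤ max s 0 - max r 0 :=
    min_sub_le' (max_le_max h le_rfl)
  linarith [max0_sub_le h]

lemma relu_trunc_le {β r s : ℝ} : max (trunc β s - trunc β r) 0 ≤ max (s - r) 0 := by
  refine max_le ?_ (le_max_right _ _)
  rcases le_total r s with h | h
  · exact le_trans (trunc_sub_le h) (le_max_left _ _)
  · have := trunc_mono (β := β) h
    have : trunc β s - trunc β r ≤ 0 := by linarith
    exact le_trans this (le_max_right _ _)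

lemma relu_trunc_sq_le {β r s : ℝ} :
    max (trunc β s - trunc β r) 0 ^ 2 ≤ max (s - r) 0 ^ 2 :=
  pow_le_pow_left₀ (le_max_right _ _) relu_trunc_le 2

lemma min_diff_mono {k k' c c' : ℝ} (hk : k ≤ k') (hc : c ≤ c') :
    min k c' - min k c ≤ min k' c' - min k' c := by
  rcases le_total k c with h | h
  · rw [min_eq_left h, min_eq_left (le_trans h hc)]
    have : min k' c ≤ min k' c' := min_le_min le_rfl hc
    linarith
  · rw [min_eq_right h, min_eq_right (le_trans h hk)]
    have : min k c' ≤ min k' c' := min_le_min hk le_rfl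
    linarith

lemma abel_id (F v : ℕ → ℝ) (n : ℕ) :
    ∑ i ∈ range n, (F (i+1) - F i) * v i
      = ∑ i ∈ range n, F (i+1) * (v i - v (i+1)) + F n * v n - F 0 * v 0 := by
  induction n with
  | zero => simp
  | succ m ih => rw [sum_range_succ, sum_range_succ, ih]; ring

lemma hasDerivAt_relu_sq (t : ℝ) :
    HasDerivAt (fun s : ℝ => max s 0 ^ 2) (2 * max t 0) t := by
  rcases lt_trichotomy t 0 with ht | ht | ht
  · have hev : (fun s : ℝ => max s 0 ^ 2) =ᶠ[nhds t] fun _ => (0:ℝ) := by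
      filter_upwards [Iio_mem_nhds ht] with s hs
      simp [max_eq_right (le_of_lt (Set.mem_Iio.1 hs))]
    have h0 := (hasDerivAt_const t (0:ℝ)).congr_of_eventuallyEq hev
    simpa [max_eq_right ht.le] using h0
  · subst ht
    have : (2 : ℝ) * max 0 0 = 0 := by simp
    rw [this, hasDerivAt_iff_isLittleO]
    refine Asymptotics.isLittleO_iff.2 fun c hc => ?_
    filter_upwards [Metric.ball_mem_nhds (0:ℝ) hc] with s hs
    simp only [Real.dist_eq, sub_zero, Metric.mem_ball] at hs
    have h1 : max s 0 ≤ |s| := max_le (le_abs_self s) (abs_nonneg s)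
    have h2 : (0:ℝ) ≤ max s 0 := le_max_right _ _
    simp only [sub_zero, smul_zero, max_self, ne_eq, OfNat.ofNat_ne_zero,
      not_false_eq_true, zero_pow, sub_zero]
    rw [Real.norm_eq_abs, Real.norm_eq_abs]
    have : max s 0 ^ 2 ≤ |s| * |s| := by nlinarith
    have habs : |max s 0 ^ 2| = max s 0 ^ 2 := abs_of_nonneg (by positivity)
    nlinarith [abs_nonneg s]
  · have hev : (fun s : ℝ => max s 0 ^ 2) =ᶠ[nhds t] fun s => s ^ 2 := by
      filter_upwards [Ioi_mem_nhds ht] with s hs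
      simp [max_eq_left (le_of_lt (Set.mem_Ioi.1 hs))]
    have h0 := (hasDerivAt_pow 2 t).congr_of_eventuallyEq hev
    simpa [max_eq_left ht.le, mul_comm] using h0


section hyper
variable {V E : Type*} [Fintype V] [Fintype E] [DecidableEq V]
variable {e : E → Finset V} {δe : E → ℝ}

lemma hsplit_nonneg (hδe : ∀ ε, 1 ≤ δe ε) (ε : E) (S : Finset V) :
    0 ≤ hsplit e δe ε S :=
  le_min (le_min (by positivity) (by positivity)) (by linarith [hδe ε])

lemma hsplit_le_inter (ε : E) (S : Finset V) :
    hsplit e δe ε S ≤ ((e ε ∩ S).card : ℝ) :=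
  le_trans (min_le_left _ _) (min_le_left _ _)

lemma hsplit_le_sdiff (ε : E) (S : Finset V) :
    hsplit e δe ε S ≤ ((e ε \ S).card : ℝ) :=
  le_trans (min_le_left _ _) (min_le_right _ _)

lemma hsplit_le_delta (ε : E) (S : Finset V) : hsplit e δe ε S ≤ δe ε :=
  min_le_right _ _

lemma hsplit_eq_zero_left (hδe : ∀ ε, 1 ≤ δe ε) {ε : E} {S : Finset V}
    (h : e ε ∩ S = ∅) : hsplit e δe ε S = 0 :=
  le_antisymm (by simpa [hsplit, h] using le_trans (min_le_left _ _) (min_le_left _ _))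
    (hsplit_nonneg hδe ε S)

lemma hsplit_eq_zero_right (hδe : ∀ ε, 1 ≤ δe ε) {ε : E} {S : Finset V}
    (h : e ε \ S = ∅) : hsplit e δe ε S = 0 :=
  le_antisymm (by simpa [h] using hsplit_le_sdiff (e := e) (δe := δe) ε S)
    (hsplit_nonneg hδe ε S)

lemma hsplit_singleton (hcard : ∀ ε, 2 ≤ (e ε).card) (hδe : ∀ ε, 1 ≤ δe ε)
    {v : V} {ε : E} (hv : v ∈ e ε) : hsplit e δe ε {v} = 1 := by
  unfold hsplit
  have h1 : e ε ∩ {v} = {v} := Finset.inter_eq_right.2 (singleton_subset_iff.2 hv)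
  have h2 : (e ε \ {v}).card = (e ε).card - 1 := by
    rw [Finset.card_sdiff_of_subset (singleton_subset_iff.2 hv), card_singleton]
  rw [h1, h2, card_singleton]
  have h3 : (1:ℝ) ≤ (((e ε).card - 1 : ℕ) : ℝ) := by
    have := hcard ε
    have : 1 ≤ (e ε).card - 1 := by omega
    exact_mod_cast this
  rw [Nat.cast_one, min_eq_left h3, min_eq_left (hδe ε)]

lemma hdeg_card (hcard : ∀ ε, 2 ≤ (e ε).card) (hδe : ∀ ε, 1 ≤ δe ε) (v : V) :
    hdeg e δe v = ((univ.filter fun ε => v ∈ e ε).card : ℝ) := by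
  unfold hdeg
  rw [Finset.sum_congr rfl fun ε hε => hsplit_singleton hcard hδe (mem_filter.1 hε).2]
  simp

lemma hdeg_nonneg (hδe : ∀ ε, 1 ≤ δe ε) (v : V) : 0 ≤ hdeg e δe v :=
  Finset.sum_nonneg fun ε _ => hsplit_nonneg hδe ε _

lemma hdeg_one_le (hcard : ∀ ε, 2 ≤ (e ε).card) (hδe : ∀ ε, 1 ≤ δe ε)
    (hcov : ∀ v : V, ∃ ε, v ∈ e ε) (v : V) : 1 ≤ hdeg e δe v := by
  rw [hdeg_card hcard hδe]
  have : (univ.filter fun ε => v ∈ e ε).Nonempty := by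
    obtain ⟨ε, hε⟩ := hcov v
    exact ⟨ε, mem_filter.2 ⟨mem_univ _, hε⟩⟩
  have := Finset.card_pos.2 this
  exact_mod_cast this

lemma card_inter_sdiff (ε : E) (S : Finset V) :
    (e ε ∩ S).card + (e ε \ S).card = (e ε).card :=
  Finset.card_inter_add_card_sdiff _ _

end hyper

section curve
variable {V : Type*} [Fintype V] [DecidableEq V] {n : ℕ} (σ : Fin n ≃ V) (d y : V → ℝ)

lemma cumVol_zero : cumVol σ d 0 = 0 := by simp [cumVol]

lemma cumVol_succ (i : Fin n) :
    cumVol σ d ((i : ℕ) + 1) = cumVol σ d (i : ℕ) + d (σ i) := by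
  unfold cumVol
  have hset : (univ.filter fun i' : Fin n => (i' : ℕ) < (i : ℕ) + 1)
      = insert i (univ.filter fun i' : Fin n => (i' : ℕ) < (i : ℕ)) := by
    ext i'
    simp only [mem_filter, mem_univ, true_and, mem_insert]
    constructor
    · intro h
      rcases Nat.lt_succ_iff_lt_or_eq.1 h with h | h
      · exact Or.inr h
      · exact Or.inl (Fin.ext h)
    · rintro (rfl | h) <;> omega
  rw [hset, sum_insert (by simp)]
  ring

lemma cumVol_mono (hd : ∀ v, 0 ≤ d v) {j j' : ℕ} (h : j ≤ j') :
    cumVol σ d j ≤ cumVol σ d j' := by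
  apply sum_le_sum_of_subset_of_nonneg
  · intro i hi
    simp only [mem_filter, mem_univ, true_and] at hi ⊢
    omega
  · exact fun i _ _ => hd _

lemma cumVol_nonneg (hd : ∀ v, 0 ≤ d v) (j : ℕ) : 0 ≤ cumVol σ d j :=
  sum_nonneg fun i _ => hd _

lemma cumVol_total : cumVol σ d n = ∑ v : V, d v := by
  unfold cumVol
  rw [filter_true_of_mem (fun i _ => i.isLt)]
  exact Equiv.sum_comp σ d

lemma cumVol_eq_range {j : ℕ} (hj : j ≤ n) :
    cumVol σ d j = ∑ i ∈ range j, (if h : i < n then d (σ ⟨i, h⟩) else 0) := by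
  unfold cumVol
  rw [sum_filter]
  rw [show (∑ i : Fin n, if (i:ℕ) < j then d (σ i) else 0)
      = ∑ i : Fin n, (fun i' : ℕ => if i' < j then (if h : i' < n then d (σ ⟨i', h⟩) else 0) else 0) (i : ℕ) from
    sum_congr rfl fun i _ => by simp [dif_pos i.isLt]]
  rw [Fin.sum_univ_eq_sum_range (fun i' : ℕ => if i' < j then (if h : i' < n then d (σ ⟨i', h⟩) else 0) else 0) n]
  rw [← sum_filter]
  congr 1
  ext a
  simp only [mem_filter, mem_range]
  omega

lemma hvol_sweep {E : Type*} [Fintype E] (e : E → Finset V) (δe : E → ℝ) (j : ℕ) :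
    hvol e δe (sweepSet σ j) = cumVol σ (hdeg e δe) j := by
  unfold hvol sweepSet cumVol
  rw [sum_image (fun a _ b _ h => σ.injective h)]

lemma mem_sweep {v : V} {j : ℕ} : v ∈ sweepSet σ j ↔ ((σ.symm v : ℕ) < j) := by
  unfold sweepSet
  simp only [mem_image, mem_filter, mem_univ, true_and]
  constructor
  · rintro ⟨i, hi, rfl⟩; simpa using hi
  · intro h; exact ⟨σ.symm v, h, σ.apply_symm_apply v⟩

lemma LS_breakpoint (hd : ∀ v, 0 ≤ d v) {j : ℕ} (hj : j ≤ n) :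
    LScurve σ d y (cumVol σ d j) = ∑ v ∈ sweepSet σ j, y v * d v := by
  unfold LScurve
  have key : ∀ i : Fin n,
      y (σ i) * (min (cumVol σ d j) (cumVol σ d ((i:ℕ)+1)) - min (cumVol σ d j) (cumVol σ d (i:ℕ)))
      = if (i:ℕ) < j then y (σ i) * d (σ i) else 0 := by
    intro i
    by_cases h : (i:ℕ) < j
    · rw [if_pos h, min_eq_right (cumVol_mono σ d hd (by omega : (i:ℕ)+1 ≤ j)),
          min_eq_right (cumVol_mono σ d hd (by omega : (i:ℕ) ≤ j)), cumVol_succ]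
      ring
    · rw [if_neg h, min_eq_left (cumVol_mono σ d hd (by omega : j ≤ (i:ℕ))),
          min_eq_left (cumVol_mono σ d hd (by omega : j ≤ (i:ℕ)+1))]
      ring
  rw [sum_congr rfl fun i _ => key i, ← sum_filter]
  unfold sweepSet
  rw [sum_image (fun a _ b _ h => σ.injective h)]

lemma LS_mono (hd : ∀ v, 0 ≤ d v) (hy : ∀ v, 0 ≤ y v) {k k' : ℝ} (h : k ≤ k') :
    LScurve σ d y k ≤ LScurve σ d y k' := by
  apply sum_le_sum
  intro i _
  apply mul_le_mul_of_nonneg_left _ (hy _)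
  apply min_diff_mono h
  rw [cumVol_succ]
  linarith [hd (σ i)]

lemma LS_telescope (hd : ∀ v, 0 ≤ d v) (k : ℝ) :
    ∑ i : Fin n, (min k (cumVol σ d ((i:ℕ)+1)) - min k (cumVol σ d (i:ℕ)))
      = min k (cumVol σ d n) - min k (cumVol σ d 0) := by
  rw [show (∑ i : Fin n, (min k (cumVol σ d ((i:ℕ)+1)) - min k (cumVol σ d (i:ℕ))))
      = ∑ i : Fin n, (fun i' : ℕ => min k (cumVol σ d (i'+1)) - min k (cumVol σ d i')) (i:ℕ) from rfl]
  rw [Fin.sum_univ_eq_sum_range (fun i' : ℕ => min k (cumVol σ d (i'+1)) - min k (cumVol σ d i')) n]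
  exact Finset.sum_range_sub (fun i => min k (cumVol σ d i)) n

lemma LS_le_bound (hd : ∀ v, 0 ≤ d v) {B k : ℝ} (hB : 0 ≤ B) (hk : 0 ≤ k)
    (hy2 : ∀ v, y v ≤ B) :
    LScurve σ d y k ≤ B * k := by
  have h1 : LScurve σ d y k
      ≤ ∑ i : Fin n, B * (min k (cumVol σ d ((i:ℕ)+1)) - min k (cumVol σ d (i:ℕ))) := by
    apply sum_le_sum
    intro i _
    have hΔ : 0 ≤ min k (cumVol σ d ((i:ℕ)+1)) - min k (cumVol σ d (i:ℕ)) := by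
      have : cumVol σ d (i:ℕ) ≤ cumVol σ d ((i:ℕ)+1) := by
        rw [cumVol_succ]; linarith [hd (σ i)]
      have := min_le_min (le_refl k) this
      linarith
    exact mul_le_mul_of_nonneg_right (hy2 _) hΔ
  rw [← mul_sum, LS_telescope σ d hd, cumVol_zero] at h1
  have h2 : min k 0 = 0 := min_eq_right hk
  rw [h2, sub_zero] at h1
  calc LScurve σ d y k ≤ B * min k (cumVol σ d n) := h1
    _ ≤ B * k := mul_le_mul_of_nonneg_left (min_le_left _ _) hB

lemma LS_max (hd : ∀ v, 0 ≤ d v) (w : V → ℝ)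
    (hsorted : ∀ i j : Fin n, i ≤ j → y (σ j) ≤ y (σ i))
    (hy : ∀ v, 0 ≤ y v)
    (hw0 : ∀ v, 0 ≤ w v) (hwd : ∀ v, w v ≤ d v) :
    ∑ v : V, w v * y v ≤ LScurve σ d y (∑ v : V, w v) := by
  classical
  set κ := ∑ v : V, w v with hκdef
  have hκ0 : 0 ≤ κ := sum_nonneg fun v _ => hw0 v
  set w' : ℕ → ℝ := fun i => if h : i < n then w (σ ⟨i, h⟩) else 0 with hw'
  set y' : ℕ → ℝ := fun i => if h : i < n then y (σ ⟨i, h⟩) else 0 with hy'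
  set W : ℕ → ℝ := fun j => ∑ i ∈ range j, w' i with hW
  set P : ℕ → ℝ := fun j => min κ (cumVol σ d j) with hP
  have hWn : W n = κ := by
    rw [hW, hκdef]
    simp only
    rw [← Equiv.sum_comp σ w, ← Fin.sum_univ_eq_sum_range]
    exact sum_congr rfl fun i _ => by simp [hw', dif_pos i.isLt]
  have hw'0 : ∀ i, 0 ≤ w' i := by
    intro i; rw [hw']; dsimp only; split
    · exact hw0 _
    · exact le_rfl
  have hy'0 : ∀ i, 0 ≤ y' i := by
    intro i; rw [hy']; dsimp only; split
    · exact hy _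
    · exact le_rfl
  have hy'mono : ∀ i : ℕ, y' (i+1) ≤ y' i := by
    intro i
    rw [hy']; dsimp only
    by_cases h1 : i + 1 < n
    · have h0 : i < n := by omega
      rw [dif_pos h1, dif_pos h0]
      exact hsorted ⟨i, h0⟩ ⟨i+1, h1⟩ (Fin.mk_le_mk.2 (Nat.le_succ i))
    · rw [dif_neg h1]
      split
      · exact hy _
      · exact le_rfl
  have hWmono : ∀ {j j' : ℕ}, j ≤ j' → W j ≤ W j' := by
    intro j j' h
    exact sum_le_sum_of_subset_of_nonneg (by simpa using h) fun i _ _ => hw'0 i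
  have hWc : ∀ j : ℕ, j ≤ n → W j ≤ cumVol σ d j := by
    intro j hj
    rw [cumVol_eq_range σ d hj, hW]
    apply sum_le_sum
    intro i _
    rw [hw']; dsimp only; split
    · exact hwd _
    · exact le_rfl
  have hF0 : W 0 - P 0 = 0 := by
    rw [hW, hP]; dsimp only
    rw [cumVol_zero, min_eq_right hκ0]
    simp
  have hFn : W n - P n = 0 := by
    rw [hWn, hP]; dsimp only
    rw [cumVol_total, min_eq_left (by rw [hκdef]; exact sum_le_sum fun v _ => hwd v)]
    ring
  have hLHS : ∑ v : V, w v * y v = ∑ i ∈ range n, w' i * y' i := by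
    rw [← Equiv.sum_comp σ (fun v => w v * y v), ← Fin.sum_univ_eq_sum_range]
    exact sum_congr rfl fun i _ => by simp [hw', hy', dif_pos i.isLt]
  have hRHS : LScurve σ d y κ = ∑ i ∈ range n, y' i * (P ((i:ℕ)+1) - P (i:ℕ)) := by
    unfold LScurve
    rw [← Fin.sum_univ_eq_sum_range (fun i => y' i * (P (i+1) - P i))]
    exact sum_congr rfl fun i _ => by simp [hy', hP, dif_pos i.isLt]
  have hdiff : ∑ i ∈ range n, w' i * y' i - LScurve σ d y κ
      = ∑ i ∈ range n, ((W (i+1) - P (i+1)) - (W i - P i)) * y' i := by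
    rw [hRHS, ← sum_sub_distrib]
    apply sum_congr rfl
    intro i _
    have hWs : W (i+1) - W i = w' i := by
      rw [hW]; dsimp only; rw [sum_range_succ]; ring
    have : w' i = W (i+1) - W i := hWs.symm
    rw [this]; ring
  have habel := abel_id (fun j => W j - P j) y' n
  have hterm : ∀ i ∈ range n, ((W (i+1) - P (i+1))) * (y' i - y' (i+1)) ≤ 0 := by
    intro i hi
    rw [mem_range] at hi
    have hF : W (i+1) - P (i+1) ≤ 0 := by
      have h1 : W (i+1) ≤ κ := by
        have := hWmono (show i+1 ≤ n by omega)
        rw [hWn] at this; exact this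
      have h2 : W (i+1) ≤ cumVol σ d (i+1) := hWc (i+1) (by omega)
      have : W (i+1) ≤ P (i+1) := by rw [hP]; exact le_min h1 h2
      linarith
    have hy2 : 0 ≤ y' i - y' (i+1) := by linarith [hy'mono i]
    exact mul_nonpos_of_nonpos_of_nonneg hF hy2
  have hsum : ∑ i ∈ range n, ((W (i+1) - P (i+1)) - (W i - P i)) * y' i ≤ 0 := by
    rw [habel, hF0, hFn]
    have : ∑ i ∈ range n, (W (i+1) - P (i+1)) * (y' i - y' (i+1)) ≤ 0 :=
      sum_nonpos hterm
    simp only [zero_mul]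
    linarith
  rw [hLHS]
  linarith [hdiff, hsum]

end curve

section minimizer
variable {V E : Type*} [Fintype V] [Fintype E] [DecidableEq V]
variable {e : E → Finset V} {δe : E → ℝ}

lemma innerQ_nonneg (hδe : ∀ ε, 1 ≤ δe ε) (ε : E) (x : V → ℝ) (a b : ℝ) :
    0 ≤ innerQ e δe ε x a b := by
  unfold innerQ
  have h1 : (0:ℝ) ≤ δe ε := by linarith [hδe ε]
  positivity

lemma Qe_le (hδe : ∀ ε, 1 ≤ δe ε) (ε : E) (x : V → ℝ) (a b : ℝ) :
    Qe e δe ε x ≤ innerQ e δe ε x a b :=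
  csInf_le ⟨0, by rintro q ⟨a', b', rfl⟩; exact innerQ_nonneg hδe ε x a' b'⟩ ⟨a, b, rfl⟩

lemma le_Qe {q : ℝ} (ε : E) (x : V → ℝ) (h : ∀ a b, q ≤ innerQ e δe ε x a b) :
    q ≤ Qe e δe ε x :=
  le_csInf ⟨innerQ e δe ε x 0 0, 0, 0, rfl⟩ (by rintro r ⟨a, b, rfl⟩; exact h a b)

lemma innerQ_trunc (hδe : ∀ ε, 1 ≤ δe ε) {β : ℝ} (ε : E) (x : V → ℝ) (a b : ℝ) :
    innerQ e δe ε (fun v => trunc β (x v)) (trunc β a) (trunc β b)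
      ≤ innerQ e δe ε x a b := by
  unfold innerQ
  have h1 : (0:ℝ) ≤ δe ε := by linarith [hδe ε]
  refine add_le_add (sum_le_sum fun v _ => add_le_add relu_trunc_sq_le relu_trunc_sq_le) ?_
  exact mul_le_mul_of_nonneg_left relu_trunc_sq_le h1

lemma Qe_trunc (hδe : ∀ ε, 1 ≤ δe ε) {β : ℝ} (ε : E) (x : V → ℝ) :
    Qe e δe ε (fun v => trunc β (x v)) ≤ Qe e δe ε x := by
  exact le_Qe ε x fun a b =>
    le_trans (Qe_le hδe ε _ (trunc β a) (trunc β b)) (innerQ_trunc hδe ε x a b)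

lemma trunc_dist_le {β s t : ℝ} (h0 : 0 ≤ t) (h1 : t ≤ β) :
    (trunc β s - t)^2 ≤ (s - t)^2 := by
  have ht : trunc β t = t := trunc_fix h0 h1
  rcases le_total t s with h | h
  · have h2 : trunc β t ≤ trunc β s := trunc_mono h
    have h3 : trunc β s - trunc β t ≤ s - t := trunc_sub_le h
    rw [ht] at h2 h3; nlinarith
  · have h2 : trunc β s ≤ trunc β t := trunc_mono h
    have h3 : trunc β t - trunc β s ≤ t - s := trunc_sub_le h
    rw [ht] at h2 h3; nlinarith

lemma trunc_dist_lt {β s t : ℝ} (hβ : 0 ≤ β) (h0 : 0 ≤ t) (h1 : t ≤ β)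
    (hs : s < 0 ∨ β < s) : (trunc β s - t)^2 < (s - t)^2 := by
  rcases hs with hs | hs
  · have h2 : trunc β s = 0 := by
      unfold trunc; rw [max_eq_right hs.le, min_eq_right hβ]
    rw [h2]; nlinarith
  · have h2 : trunc β s = β := by
      unfold trunc; rw [max_eq_left (by linarith), min_eq_left (by linarith)]
    rw [h2]; nlinarith

lemma x_bounds (hcard : ∀ ε, 2 ≤ (e ε).card) (hδe : ∀ ε, 1 ≤ δe ε)
    (hcov : ∀ v : V, ∃ ε, v ∈ e ε) {γ : ℝ} (hγ : 0 < γ) {S : Finset V} (hS0 : 0 < hvol e δe S)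
    {x : V → ℝ} (hx : ∀ y : V → ℝ, Qobj e δe γ S x ≤ Qobj e δe γ S y) :
    ∀ v, 0 ≤ x v ∧ x v ≤ (hvol e δe S)⁻¹ := by
  classical
  set β := (hvol e δe S)⁻¹ with hβdef
  have hβ : 0 < β := inv_pos.2 hS0
  by_contra hcon
  push_neg at hcon
  obtain ⟨v, hv⟩ := hcon
  have hv' : x v < 0 ∨ β < x v := by
    by_cases h0 : 0 ≤ x v
    · exact Or.inr (hv h0)
    · exact Or.inl (lt_of_not_ge h0)
  set y := fun u => trunc β (x u) with hy
  set p := fun u => (if u ∈ S then (1:ℝ) else 0) / hvol e δe S with hp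
  have hpmem : ∀ u, 0 ≤ p u ∧ p u ≤ β := by
    intro u
    rw [hp]; dsimp only
    by_cases h : u ∈ S
    · rw [if_pos h]
      constructor
      · positivity
      · rw [hβdef, one_div]
    · rw [if_neg h]
      simp [hβ.le]
  have hfid : ∑ u : V, hdeg e δe u * (y u - p u)^2
      < ∑ u : V, hdeg e δe u * (x u - p u)^2 := by
    apply sum_lt_sum
    · intro u _
      exact mul_le_mul_of_nonneg_left (trunc_dist_le (hpmem u).1 (hpmem u).2)
        (hdeg_nonneg hδe u)
    · refine ⟨v, mem_univ v, ?_⟩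
      have h1 : (1:ℝ) ≤ hdeg e δe v := hdeg_one_le hcard hδe hcov v
      exact mul_lt_mul_of_pos_left
        (trunc_dist_lt hβ.le (hpmem v).1 (hpmem v).2 hv') (by linarith)
  have hQes : ∑ ε : E, Qe e δe ε y ≤ ∑ ε : E, Qe e δe ε x :=
    sum_le_sum fun ε _ => Qe_trunc hδe ε x
  have hform : ∀ z : V → ℝ, Qobj e δe γ S z
      = γ * ∑ u : V, hdeg e δe u * (z u - p u)^2 + ∑ ε : E, Qe e δe ε z := by
    intro z; unfold Qobj; simp only [hp]
  have hlt : Qobj e δe γ S y < Qobj e δe γ S x := by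
    rw [hform y, hform x]
    have := mul_lt_mul_of_pos_left hfid hγ
    linarith
  exact absurd (hx y) (not_le.2 hlt)

lemma innerQ_shift (ε : E) (x : V → ℝ) (c a b : ℝ) :
    innerQ e δe ε (fun v => x v + c) a b = innerQ e δe ε x (a - c) (b - c) := by
  unfold innerQ
  congr 1
  · apply sum_congr rfl
    intro v _
    have h1 : x v + c - a = x v - (a - c) := by ring
    have h2 : b - (x v + c) = b - c - x v := by ring
    rw [h1, h2]
  · have h3 : a - b = a - c - (b - c) := by ring
    rw [← h3]

lemma Qe_shift (ε : E) (x : V → ℝ) (c : ℝ) :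
    Qe e δe ε (fun v => x v + c) = Qe e δe ε x := by
  unfold Qe
  congr 1
  ext q
  constructor
  · rintro ⟨a, b, rfl⟩
    exact ⟨a - c, b - c, innerQ_shift ε x c a b⟩
  · rintro ⟨a, b, rfl⟩
    refine ⟨a + c, b + c, ?_⟩
    rw [innerQ_shift ε x c (a+c) (b+c)]
    simp

lemma sum_rule (hcard : ∀ ε, 2 ≤ (e ε).card) (hδe : ∀ ε, 1 ≤ δe ε)
    {γ : ℝ} (hγ : 0 < γ) {S : Finset V} (hS0 : 0 < hvol e δe S)
    {x : V → ℝ} (hx : ∀ y : V → ℝ, Qobj e δe γ S x ≤ Qobj e δe γ S y) :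
    ∑ v : V, hdeg e δe v * (x v - (if v ∈ S then (1:ℝ) else 0) / hvol e δe S) = 0 := by
  classical
  set p := fun u => (if u ∈ S then (1:ℝ) else 0) / hvol e δe S with hp
  set L := ∑ v : V, hdeg e δe v * (x v - p v) with hL
  set D := ∑ v : V, hdeg e δe v with hD
  have hDpos : 0 < D := by
    have h1 : hvol e δe S ≤ D := by
      rw [hD]
      exact sum_le_sum_of_subset_of_nonneg (subset_univ S) fun v _ _ => hdeg_nonneg hδe v
    linarith
  have key : ∀ c : ℝ, 0 ≤ γ * (2 * c * L + c^2 * D) := by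
    intro c
    have h1 := hx (fun v => x v + c)
    have hform : ∀ z : V → ℝ, Qobj e δe γ S z
        = γ * ∑ u : V, hdeg e δe u * (z u - p u)^2 + ∑ ε : E, Qe e δe ε z := by
      intro z; unfold Qobj; simp only [hp]
    rw [hform, hform] at h1
    have hQes : ∑ ε : E, Qe e δe ε (fun v => x v + c) = ∑ ε : E, Qe e δe ε x :=
      sum_congr rfl fun ε _ => Qe_shift ε x c
    rw [hQes] at h1
    have hexp : ∑ u : V, hdeg e δe u * ((x u + c) - p u)^2
        = ∑ u : V, hdeg e δe u * (x u - p u)^2 + (2 * c * L + c^2 * D) := by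
      rw [hL, hD, mul_sum, mul_sum, ← sum_add_distrib, ← sum_add_distrib]
      apply sum_congr rfl
      intro u _
      ring
    rw [hexp] at h1
    nlinarith [h1]
  have hfin := key (-L / D)
  have hne : D ≠ 0 := ne_of_gt hDpos
  have hexp2 : 2 * (-L / D) * L + (-L / D)^2 * D = - (L^2 / D) := by
    field_simp
    ring
  rw [hexp2] at hfin
  have hL2 : L^2 ≤ 0 := by
    by_contra hpos
    push_neg at hpos
    have : 0 < L^2 / D := div_pos hpos hDpos
    nlinarith
  have hLz : L = 0 := by nlinarith [sq_nonneg L]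
  exact hLz

lemma exists_ab (hδe : ∀ ε, 1 ≤ δe ε) {x : V → ℝ} {β : ℝ} (hβ : 0 ≤ β)
    (hxr : ∀ v, 0 ≤ x v ∧ x v ≤ β) (ε : E) :
    ∃ a b : ℝ, Qe e δe ε x = innerQ e δe ε x a b ∧
      ∀ a' b', innerQ e δe ε x a b ≤ innerQ e δe ε x a' b' := by
  have hK : IsCompact (Set.Icc (0:ℝ) β ×ˢ Set.Icc (0:ℝ) β) :=
    isCompact_Icc.prod isCompact_Icc
  have hne : (Set.Icc (0:ℝ) β ×ˢ Set.Icc (0:ℝ) β).Nonempty :=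
    ⟨(0,0), Set.mem_prod.2 ⟨Set.mem_Icc.2 ⟨le_rfl, hβ⟩, Set.mem_Icc.2 ⟨le_rfl, hβ⟩⟩⟩
  have hcont : ContinuousOn (fun q : ℝ × ℝ => innerQ e δe ε x q.1 q.2)
      (Set.Icc (0:ℝ) β ×ˢ Set.Icc (0:ℝ) β) := by
    apply Continuous.continuousOn
    unfold innerQ
    continuity
  obtain ⟨q, hqmem, hqmin⟩ := hK.exists_isMinOn hne hcont
  have hTx : (fun v => trunc β (x v)) = x := by
    funext v; exact trunc_fix (hxr v).1 (hxr v).2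
  have hmin : ∀ a' b', innerQ e δe ε x q.1 q.2 ≤ innerQ e δe ε x a' b' := by
    intro a' b'
    have h1 : (trunc β a', trunc β b') ∈ Set.Icc (0:ℝ) β ×ˢ Set.Icc (0:ℝ) β := by
      constructor
      · exact Set.mem_Icc.2 ⟨(trunc_mem hβ).1, (trunc_mem hβ).2⟩
      · exact Set.mem_Icc.2 ⟨(trunc_mem hβ).1, (trunc_mem hβ).2⟩
    have h2 := isMinOn_iff.1 hqmin _ h1
    have h3 : innerQ e δe ε x (trunc β a') (trunc β b') ≤ innerQ e δe ε x a' b' := by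
      have := innerQ_trunc (e := e) hδe (β := β) ε x a' b'
      rwa [hTx] at this
    exact le_trans h2 h3
  exact ⟨q.1, q.2, le_antisymm (Qe_le hδe ε x q.1 q.2) (le_Qe ε x hmin), hmin⟩

lemma stat_a (hδe : ∀ ε, 1 ≤ δe ε) {x : V → ℝ} {ε : E} {a b : ℝ}
    (hmin : ∀ a' b', innerQ e δe ε x a b ≤ innerQ e δe ε x a' b') :
    ∑ w ∈ e ε, max (x w - a) 0 = δe ε * max (a - b) 0 := by
  have hloc : IsLocalMin (fun α => innerQ e δe ε x α b) a :=
    Filter.Eventually.of_forall fun α => hmin α b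
  have hderiv : HasDerivAt (fun α => innerQ e δe ε x α b)
      ((∑ w ∈ e ε, (2 * max (x w - a) 0 * (-1) + 0)) + δe ε * (2 * max (a - b) 0 * 1)) a := by
    unfold innerQ
    apply HasDerivAt.add
    · apply HasDerivAt.fun_sum
      intro w _
      apply HasDerivAt.add
      · exact (hasDerivAt_relu_sq (x w - a)).comp a ((hasDerivAt_id a).const_sub (x w))
      · exact hasDerivAt_const a _
    · exact ((hasDerivAt_relu_sq (a - b)).comp a ((hasDerivAt_id a).sub_const b)).const_mul (δe ε)
  have h0 := hloc.hasDerivAt_eq_zero hderiv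
  have hsum : ∑ w ∈ e ε, (2 * max (x w - a) 0 * (-1) + 0)
      = -2 * ∑ w ∈ e ε, max (x w - a) 0 := by
    rw [sum_congr rfl (fun w _ => show 2 * max (x w - a) 0 * (-1) + 0
      = (-2) * max (x w - a) 0 by ring), ← mul_sum]
  rw [hsum] at h0
  nlinarith [h0]

lemma stat_b (hδe : ∀ ε, 1 ≤ δe ε) {x : V → ℝ} {ε : E} {a b : ℝ}
    (hmin : ∀ a' b', innerQ e δe ε x a b ≤ innerQ e δe ε x a' b') :
    ∑ w ∈ e ε, max (b - x w) 0 = δe ε * max (a - b) 0 := by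
  have hloc : IsLocalMin (fun β' => innerQ e δe ε x a β') b :=
    Filter.Eventually.of_forall fun β' => hmin a β'
  have hderiv : HasDerivAt (fun β' => innerQ e δe ε x a β')
      ((∑ w ∈ e ε, (0 + 2 * max (b - x w) 0 * 1)) + δe ε * (2 * max (a - b) 0 * (-1))) b := by
    unfold innerQ
    apply HasDerivAt.add
    · apply HasDerivAt.fun_sum
      intro w _
      apply HasDerivAt.add
      · exact hasDerivAt_const b _
      · exact (hasDerivAt_relu_sq (b - x w)).comp b ((hasDerivAt_id b).sub_const (x w))
    · exact ((hasDerivAt_relu_sq (a - b)).comp b ((hasDerivAt_id b).const_sub a)).const_mul (δe ε)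
  have h0 := hloc.hasDerivAt_eq_zero hderiv
  have hsum : ∑ w ∈ e ε, ((0:ℝ) + 2 * max (b - x w) 0 * 1)
      = 2 * ∑ w ∈ e ε, max (b - x w) 0 := by
    rw [sum_congr rfl (fun w _ => show (0:ℝ) + 2 * max (b - x w) 0 * 1
      = 2 * max (b - x w) 0 by ring), ← mul_sum]
  rw [hsum] at h0
  nlinarith [h0]

lemma b_le_a (hcard : ∀ ε, 2 ≤ (e ε).card) (hδe : ∀ ε, 1 ≤ δe ε)
    {x : V → ℝ} {ε : E} {a b : ℝ}
    (hmin : ∀ a' b', innerQ e δe ε x a b ≤ innerQ e δe ε x a' b') : b ≤ a := by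
  by_contra hab
  push_neg at hab
  have hΔ : max (a - b) 0 = 0 := max_eq_right (by linarith)
  have ha := stat_a hδe hmin
  have hb := stat_b hδe hmin
  rw [hΔ, mul_zero] at ha hb
  have hpos : 0 < (e ε).card := lt_of_lt_of_le (by norm_num) (hcard ε)
  obtain ⟨w, hw⟩ := Finset.card_pos.1 hpos
  have h1 : max (x w - a) 0 = 0 := by
    have hall := (Finset.sum_eq_zero_iff_of_nonneg
      (fun w' _ => le_max_right (x w' - a) 0)).1 ha w hw
    exact hall
  have h2 : max (b - x w) 0 = 0 := by
    exact (Finset.sum_eq_zero_iff_of_nonneg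
      (fun w' _ => le_max_right (b - x w') 0)).1 hb w hw
  have h3 : x w - a ≤ 0 := by
    by_contra h; push_neg at h
    rw [max_eq_left h.le] at h1; linarith
  have h4 : b - x w ≤ 0 := by
    by_contra h; push_neg at h
    rw [max_eq_left h.le] at h2; linarith
  linarith

lemma stat_v (hδe : ∀ ε, 1 ≤ δe ε)
    {γ : ℝ} {S : Finset V}
    {x : V → ℝ} (hx : ∀ y : V → ℝ, Qobj e δe γ S x ≤ Qobj e δe γ S y)
    (a b : E → ℝ)
    (hab : ∀ ε, Qe e δe ε x = innerQ e δe ε x (a ε) (b ε)) (v : V) :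
    γ * (hdeg e δe v * (x v - (if v ∈ S then (1:ℝ) else 0) / hvol e δe S))
      + ∑ ε ∈ univ.filter (fun ε => v ∈ e ε),
          (max (x v - a ε) 0 - max (b ε - x v) 0) = 0 := by
  classical
  set p := fun u : V => (if u ∈ S then (1:ℝ) else 0) / hvol e δe S with hp
  set G := fun z : V → ℝ => γ * ∑ u : V, hdeg e δe u * (z u - p u)^2
      + ∑ ε : E, innerQ e δe ε z (a ε) (b ε) with hG
  have hGmin : ∀ z, G x ≤ G z := by
    intro z
    have h1 : G x = Qobj e δe γ S x := by
      rw [hG]; unfold Qobj; simp only [hp]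
      rw [sum_congr rfl fun ε _ => (hab ε).symm]
    have h2 : Qobj e δe γ S z ≤ G z := by
      rw [hG]; unfold Qobj; simp only [hp]
      exact add_le_add le_rfl (sum_le_sum fun ε _ => Qe_le hδe ε z (a ε) (b ε))
    calc G x = Qobj e δe γ S x := h1
      _ ≤ Qobj e δe γ S z := hx z
      _ ≤ G z := h2
  set φ := fun s : ℝ => G (Function.update x v s) with hφ
  have hφform : φ = fun s =>
      γ * ∑ u : V, hdeg e δe u * ((if u = v then s else x u) - p u)^2
      + ∑ ε : E, ((∑ w ∈ e ε, (max ((if w = v then s else x w) - a ε) 0 ^ 2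
          + max (b ε - (if w = v then s else x w)) 0 ^ 2))
        + δe ε * max (a ε - b ε) 0 ^ 2) := by
    funext s
    rw [hφ, hG]
    simp only [innerQ, Function.update_apply]
  have hloc : IsLocalMin φ (x v) := by
    apply Filter.Eventually.of_forall
    intro s
    have hself : φ (x v) = G x := by rw [hφ]; simp only [Function.update_eq_self]
    rw [hself]
    exact hGmin _
  have hderiv : HasDerivAt φ
      (γ * ∑ u : V, (if u = v then hdeg e δe u * (2 * (x v - p u)) else 0)
        + ∑ ε : E, (∑ w ∈ e ε,
            if w = v then 2 * max (x v - a ε) 0 - 2 * max (b ε - x v) 0 else 0)) (x v) := by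
    rw [hφform]
    apply HasDerivAt.add
    · apply HasDerivAt.const_mul
      apply HasDerivAt.fun_sum
      intro u _
      by_cases h : u = v
      · simp only [if_pos h]
        have base : HasDerivAt (fun s : ℝ => (s - p u)^2) (2 * (x v - p u)) (x v) := by
          simpa using ((hasDerivAt_id (x v)).sub_const (p u)).fun_pow 2
        exact base.const_mul (hdeg e δe u)
      · simp only [if_neg h]
        exact hasDerivAt_const _ _
    · apply HasDerivAt.fun_sum
      intro ε _
      apply HasDerivAt.add_const
      apply HasDerivAt.fun_sum
      intro w _
      by_cases h : w = v
      · simp only [if_pos h]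
        have d1 : HasDerivAt (fun s : ℝ => max (s - a ε) 0 ^ 2)
            (2 * max (x v - a ε) 0) (x v) := by
          simpa [Function.comp_def] using (hasDerivAt_relu_sq (x v - a ε)).comp (x v)
            ((hasDerivAt_id (x v)).sub_const (a ε))
        have d2 : HasDerivAt (fun s : ℝ => max (b ε - s) 0 ^ 2)
            (-(2 * max (b ε - x v) 0)) (x v) := by
          simpa [Function.comp_def] using (hasDerivAt_relu_sq (b ε - x v)).comp (x v)
            ((hasDerivAt_id (x v)).const_sub (b ε))
        have := d1.add d2
        convert this using 1
        · rfl
        · exact sub_eq_add_neg (2 * max (x v - a ε) 0) (2 * max (b ε - x v) 0)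
      · simp only [if_neg h]
        exact hasDerivAt_const _ _
  have h0 := hloc.hasDerivAt_eq_zero hderiv
  have hs1 : ∑ u : V, (if u = v then hdeg e δe u * (2 * (x v - p u)) else 0)
      = hdeg e δe v * (2 * (x v - p v)) := by
    rw [Finset.sum_ite_eq' univ v (fun u => hdeg e δe u * (2 * (x v - p u)))]
    simp
  have hs2 : ∀ ε : E, (∑ w ∈ e ε,
      if w = v then 2 * max (x v - a ε) 0 - 2 * max (b ε - x v) 0 else 0)
      = if v ∈ e ε then 2 * max (x v - a ε) 0 - 2 * max (b ε - x v) 0 else 0 := by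
    intro ε
    rw [Finset.sum_ite_eq' (e ε) v
      (fun _ => 2 * max (x v - a ε) 0 - 2 * max (b ε - x v) 0)]
  have hs3 : ∑ ε : E, (if v ∈ e ε then 2 * max (x v - a ε) 0 - 2 * max (b ε - x v) 0 else 0)
      = 2 * ∑ ε ∈ univ.filter (fun ε => v ∈ e ε),
          (max (x v - a ε) 0 - max (b ε - x v) 0) := by
    rw [← sum_filter, mul_sum]
    exact sum_congr rfl fun ε _ => by ring
  rw [hs1, sum_congr rfl fun ε _ => hs2 ε, hs3] at h0
  have hpv : p v = (if v ∈ S then (1:ℝ) else 0) / hvol e δe S := rfl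
  rw [← hpv]
  nlinarith [h0]

lemma deltaBar_nonneg (hδe : ∀ ε, 1 ≤ δe ε) (T : Finset V) :
    0 ≤ deltaBar e δe T := by
  apply Real.sSup_nonneg
  rintro r ⟨ε, _, rfl⟩
  have := hδe ε
  have h2 : (0:ℝ) ≤ ((e ε).card : ℝ) / 2 := by positivity
  exact le_min (by linarith) h2

lemma le_deltaBar {T : Finset V} {ε : E} (hb : ε ∈ hbdry e T) :
    min (δe ε) (((e ε).card : ℝ) / 2) ≤ deltaBar e δe T := by
  apply le_csSup
  · exact (Set.toFinite _).bddAbove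
  · exact ⟨ε, hb, rfl⟩

lemma one_le_deltaBar (hcard : ∀ ε, 2 ≤ (e ε).card) (hδe : ∀ ε, 1 ≤ δe ε)
    {T : Finset V} {ε : E} (hb : ε ∈ hbdry e T) : 1 ≤ deltaBar e δe T := by
  refine le_trans ?_ (le_deltaBar hb)
  have h1 := hδe ε
  have h2 : (2:ℝ) ≤ ((e ε).card : ℝ) := by exact_mod_cast hcard ε
  exact le_min h1 (by linarith)

lemma spade {A B : Finset V} (x : V → ℝ) {a b δ c s X Y : ℝ}
    (hA : A.Nonempty) (hB : B.Nonempty)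
    (hstata : ∑ w ∈ A, max (x w - a) 0 + ∑ w ∈ B, max (x w - a) 0
      = δ * max (a - b) 0)
    (hstatb : ∑ w ∈ A, max (b - x w) 0 + ∑ w ∈ B, max (b - x w) 0
      = δ * max (a - b) 0)
    (hba : b ≤ a)
    (hYle : ∀ w ∈ A, Y ≤ x w) (hXge : ∀ w ∈ B, x w ≤ X) (hXY : X ≤ Y)
    (hs0 : 0 ≤ s) (hs3 : s ≤ 1/3) (hsc1 : s * c ≤ 1)
    (hcA : c ≤ (A.card : ℝ)) (hcB : c ≤ (B.card : ℝ)) (hcδ : c ≤ δ) (hc0 : 0 ≤ c) :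
    ∑ u ∈ B, (max (x u - a) 0 - max (b - x u) 0) ≤ s * c * X - s * c * Y := by
  set Δ := max (a - b) 0 with hΔdef
  have hΔ0 : 0 ≤ Δ := le_max_right _ _
  set P := ∑ u ∈ B, max (x u - a) 0 with hP
  set N := ∑ u ∈ B, max (b - x u) 0 with hN
  set DA := ∑ w ∈ A, max (x w - a) 0 with hDA
  set UA := ∑ w ∈ A, max (b - x w) 0 with hUA
  have hP0 : 0 ≤ P := sum_nonneg fun u _ => le_max_right _ _
  have hN0 : 0 ≤ N := sum_nonneg fun u _ => le_max_right _ _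
  have hDA0 : 0 ≤ DA := sum_nonneg fun u _ => le_max_right _ _
  have hUA0 : 0 ≤ UA := sum_nonneg fun u _ => le_max_right _ _
  have hgoal : ∑ u ∈ B, (max (x u - a) 0 - max (b - x u) 0) = P - N :=
    sum_sub_distrib _ _
  rw [hgoal]
  have hXY0 : 0 ≤ Y - X := by linarith
  by_cases hXa : X ≤ a
  · have hPz : P = 0 := sum_eq_zero fun u hu =>
      max_eq_right (by linarith [hXge u hu])
    by_cases hbY : Y ≤ b
    · obtain ⟨u0, hu0⟩ := hB
      have hNlb : max (b - x u0) 0 ≤ N :=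
        single_le_sum (fun u _ => le_max_right (b - x u) 0) hu0
      have h2 : Y - X ≤ max (b - x u0) 0 :=
        le_trans (by linarith [hXge u0 hu0]) (le_max_left _ _)
      have h3 : s * c * (Y - X) ≤ Y - X := by nlinarith
      linarith
    · push_neg at hbY
      have hUAz : UA = 0 := sum_eq_zero fun w hw =>
        max_eq_right (by linarith [hYle w hw])
      have hNδ : N = δ * Δ := by
        have := hstatb; linarith
      have hDAle : DA ≤ δ * Δ := by
        have := hstata; linarith
      have h1 : (A.card : ℝ) * max (Y - a) 0 ≤ δ * Δ := by
        have hle : ∑ w ∈ A, max (Y - a) 0 ≤ DA :=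
          sum_le_sum fun w hw => max_le_max (by linarith [hYle w hw]) le_rfl
        rw [sum_const, nsmul_eq_mul] at hle
        linarith
      have h2 : (B.card : ℝ) * max (b - X) 0 ≤ δ * Δ := by
        have hle : ∑ u ∈ B, max (b - X) 0 ≤ N :=
          sum_le_sum fun u hu => max_le_max (by linarith [hXge u hu]) le_rfl
        rw [sum_const, nsmul_eq_mul] at hle
        linarith
      have h3 : Y - X ≤ max (Y - a) 0 + Δ + max (b - X) 0 := by
        have e1 : Y - a ≤ max (Y - a) 0 := le_max_left _ _
        have e2 : a - b ≤ Δ := le_max_left _ _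
        have e3 : b - X ≤ max (b - X) 0 := le_max_left _ _
        linarith
      have hm1 : 0 ≤ max (Y - a) 0 := le_max_right _ _
      have hm2 : 0 ≤ max (b - X) 0 := le_max_right _ _
      have hδΔ : 0 ≤ δ * Δ := by linarith
      have hcm1 : c * max (Y - a) 0 ≤ δ * Δ :=
        le_trans (mul_le_mul_of_nonneg_right hcA hm1) h1
      have hcm2 : c * max (b - X) 0 ≤ δ * Δ :=
        le_trans (mul_le_mul_of_nonneg_right hcB hm2) h2
      have hcm3 : c * Δ ≤ δ * Δ := mul_le_mul_of_nonneg_right hcδ hΔ0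
      have k1 : c * (Y - X) ≤ c * (max (Y - a) 0 + Δ + max (b - X) 0) :=
        mul_le_mul_of_nonneg_left h3 hc0
      have k1' : c * (max (Y - a) 0 + Δ + max (b - X) 0)
          = c * max (Y - a) 0 + c * Δ + c * max (b - X) 0 := by ring
      have k2 : c * (Y - X) ≤ 3 * (δ * Δ) := by linarith
      have k3 : s * (c * (Y - X)) ≤ s * (3 * (δ * Δ)) :=
        mul_le_mul_of_nonneg_left k2 hs0
      have k4 : s * (3 * (δ * Δ)) ≤ δ * Δ := by nlinarith
      have k5 : s * (c * (Y - X)) = s * c * Y - s * c * X := by ring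
      linarith
  · push_neg at hXa
    have hUAz : UA = 0 := sum_eq_zero fun w hw =>
      max_eq_right (by linarith [hYle w hw])
    have hNδ : N = δ * Δ := by
      have := hstatb; linarith
    obtain ⟨w0, hw0⟩ := hA
    have hDAlb : max (x w0 - a) 0 ≤ DA :=
      single_le_sum (fun w _ => le_max_right (x w - a) 0) hw0
    have h2 : Y - a ≤ max (x w0 - a) 0 :=
      le_trans (by linarith [hYle w0 hw0]) (le_max_left _ _)
    have hPδ : P = δ * Δ - DA := by
      have := hstata; linarith
    have h3 : s * c * (Y - X) ≤ Y - X := by nlinarith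
    linarith

end minimizer

section seed
variable {V : Type*} [Fintype V] [DecidableEq V]

lemma seed_curve {n : ℕ} (σ₀ : Fin n ≃ V) (d : V → ℝ) (hd : ∀ v, 0 ≤ d v)
    {S : Finset V} {β : ℝ} (hβ : 0 < β) (x₀ : V → ℝ)
    (hx₀v : ∀ v, x₀ v = if v ∈ S then β else 0)
    (hσ₀ : ∀ i j : Fin n, i ≤ j → x₀ (σ₀ j) ≤ x₀ (σ₀ i))
    {k : ℝ} (hk : 0 ≤ k) :
    LScurve σ₀ d x₀ k = β * min k (∑ v ∈ S, d v) := by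
  classical
  set m := S.card with hm
  have hn : n = Fintype.card V := by
    rw [← Fintype.card_fin n]; exact Fintype.card_congr σ₀
  have hmn : m ≤ n := by
    rw [hm, hn]; exact Finset.card_le_univ S
  set T := univ.filter (fun i : Fin n => σ₀ i ∈ S) with hT
  have hTcard : T.card = m := by
    rw [hT, hm]
    apply Finset.card_bij (fun i _ => σ₀ i)
    · intro i hi; exact (mem_filter.1 hi).2
    · intro i _ j _ hij; exact σ₀.injective hij
    · intro v hv
      exact ⟨σ₀.symm v, mem_filter.2 ⟨mem_univ _, by simp [hv]⟩,
        σ₀.apply_symm_apply v⟩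
  have hAS : ∀ i : Fin n, (i:ℕ) < m → σ₀ i ∈ S := by
    intro i hi
    by_contra hnot
    have hzero : x₀ (σ₀ i) = 0 := by rw [hx₀v]; simp [hnot]
    have hsub : T ⊆ univ.filter (fun j : Fin n => (j:ℕ) < (i:ℕ)) := by
      intro j hj
      simp only [hT, mem_filter, mem_univ, true_and] at hj ⊢
      by_contra hge
      push_neg at hge
      have hij : i ≤ j := by rw [Fin.le_def]; exact hge
      have h1 := hσ₀ i j hij
      rw [hzero] at h1
      have h2 : x₀ (σ₀ j) = β := by rw [hx₀v]; simp [hj]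
      linarith
    have hcard2 : T.card ≤ (i:ℕ) := by
      calc T.card ≤ (univ.filter (fun j : Fin n => (j:ℕ) < (i:ℕ))).card :=
            card_le_card hsub
        _ ≤ (range (i:ℕ)).card := by
            apply card_le_card_of_injOn (fun j : Fin n => (j:ℕ))
            · intro j hj
              exact mem_range.2 (mem_filter.1 hj).2
            · intro j _ j' _ h; exact Fin.ext h
        _ = (i:ℕ) := card_range _
    omega
  have hBS : ∀ i : Fin n, m ≤ (i:ℕ) → σ₀ i ∉ S := by
    intro i hi hmem
    have hβi : x₀ (σ₀ i) = β := by rw [hx₀v]; simp [hmem]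
    have hsub : univ.filter (fun j : Fin n => (j:ℕ) ≤ (i:ℕ)) ⊆ T := by
      intro j hj
      simp only [mem_filter, mem_univ, true_and] at hj
      simp only [hT, mem_filter, mem_univ, true_and]
      have hji : j ≤ i := by rw [Fin.le_def]; exact hj
      have h1 := hσ₀ j i hji
      rw [hβi] at h1
      by_contra hnot
      have h2 : x₀ (σ₀ j) = 0 := by rw [hx₀v]; simp [hnot]
      linarith
    have hbig : (i:ℕ) + 1 ≤ T.card := by
      calc (i:ℕ) + 1 = (range ((i:ℕ)+1)).card := (card_range _).symm
        _ ≤ (univ.filter (fun j : Fin n => (j:ℕ) ≤ (i:ℕ))).card := by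
            apply card_le_card_of_injOn
              (fun jn : ℕ => (⟨min jn (i:ℕ), lt_of_le_of_lt (min_le_right _ _) i.isLt⟩ : Fin n))
            · intro jn _
              simp only [mem_filter, mem_univ, true_and]
              exact mem_filter.2 ⟨mem_univ _, Nat.min_le_right _ _⟩
            · intro a ha a' ha' h
              have h1 := congrArg Fin.val h
              simp only at h1
              rw [mem_coe, mem_range] at ha ha'
              rw [Nat.min_eq_left (by omega), Nat.min_eq_left (by omega)] at h1
              exact h1
        _ ≤ T.card := card_le_card hsub
    omega
  have hval : ∀ i : Fin n, x₀ (σ₀ i) = if (i:ℕ) < m then β else 0 := by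
    intro i
    by_cases h : (i:ℕ) < m
    · rw [if_pos h, hx₀v, if_pos (hAS i h)]
    · rw [if_neg h, hx₀v, if_neg (hBS i (le_of_not_gt h))]
  have hsweepS : sweepSet σ₀ m = S := by
    ext v
    rw [mem_sweep]
    constructor
    · intro h
      have := hAS (σ₀.symm v) h
      rwa [σ₀.apply_symm_apply] at this
    · intro hv
      by_contra h
      have := hBS (σ₀.symm v) (le_of_not_gt h)
      rw [σ₀.apply_symm_apply] at this
      exact this hv
  have hcS : cumVol σ₀ d m = ∑ v ∈ S, d v := by
    have h1 : cumVol σ₀ d m = ∑ v ∈ sweepSet σ₀ m, d v := by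
      unfold cumVol sweepSet
      rw [sum_image (fun a _ b _ h => σ₀.injective h)]
    rw [h1, hsweepS]
  unfold LScurve
  rw [sum_congr rfl fun i _ => by rw [hval i]]
  have hstep : ∀ i : Fin n,
      (if (i:ℕ) < m then β else 0)
        * (min k (cumVol σ₀ d ((i:ℕ)+1)) - min k (cumVol σ₀ d (i:ℕ)))
      = β * (fun jn : ℕ => if jn < m
          then min k (cumVol σ₀ d (jn+1)) - min k (cumVol σ₀ d jn) else 0) (i:ℕ) := by
    intro i
    dsimp only
    by_cases h : (i:ℕ) < m
    · rw [if_pos h, if_pos h]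
    · rw [if_neg h, if_neg h, zero_mul, mul_zero]
  rw [sum_congr rfl fun i _ => hstep i, ← mul_sum]
  rw [Fin.sum_univ_eq_sum_range (fun jn : ℕ => if jn < m
      then min k (cumVol σ₀ d (jn+1)) - min k (cumVol σ₀ d jn) else 0) n]
  rw [← sum_filter]
  have hfilt : (range n).filter (fun jn => jn < m) = range m := by
    ext a; simp only [mem_filter, mem_range]; omega
  rw [hfilt, Finset.sum_range_sub (fun jn => min k (cumVol σ₀ d jn)) m]
  rw [cumVol_zero, min_eq_right hk, sub_zero, hcS]

end seed
end LSaux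


open Finset in
/-- Mixing step (Lemma `lm:diffusion2`): for the minimizer `x = x(γ,S)` of the
diffusion objective and `x₀ = 1_S / vol(S)`, every sweep set `S_j` of `x` with
`0 < vol S_j < M` satisfies, with `σ_j = (1 + 2 δ̄(S_j))⁻¹` (so `σ_j = 1` when
`∂S_j = ∅`),
`I_x(vol S_j) ≤ (γ/(2+γ)) I_{x₀}(vol S_j) + (1/(2+γ)) (I_x(vol S_j − σ_j cut S_j) + I_x(vol S_j + σ_j cut S_j))`;
moreover `I_x(k) ≤ I_{x₀}(k)` for all `k ∈ [0,M]`. -/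
theorem ls_mixing_step {V E : Type*} [Fintype V] [Fintype E] [DecidableEq V]
    (e : E → Finset V) (δe : E → ℝ)
    (hcard : ∀ ε, 2 ≤ (e ε).card) (hδe : ∀ ε, 1 ≤ δe ε)
    (hcov : ∀ v : V, ∃ ε, v ∈ e ε)
    (γ : ℝ) (hγ : 0 < γ)
    (S : Finset V) (hS0 : 0 < hvol e δe S)
    (x : V → ℝ) (hx : ∀ y : V → ℝ, Qobj e δe γ S x ≤ Qobj e δe γ S y)
    (x₀ : V → ℝ) (hx₀ : ∀ v, x₀ v = (if v ∈ S then 1 else 0) / hvol e δe S)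
    (σ : Fin (Fintype.card V) ≃ V)
    (hσ : ∀ i j : Fin (Fintype.card V), i ≤ j → x (σ j) ≤ x (σ i))
    (σ₀ : Fin (Fintype.card V) ≃ V)
    (hσ₀ : ∀ i j : Fin (Fintype.card V), i ≤ j → x₀ (σ₀ j) ≤ x₀ (σ₀ i)) :
    (∀ j : ℕ, j ≤ Fintype.card V → 0 < hvol e δe (sweepSet σ j) →
      hvol e δe (sweepSet σ j) < hM e δe →
      LScurve σ (hdeg e δe) x (hvol e δe (sweepSet σ j)) ≤
        (γ / (2 + γ)) * LScurve σ₀ (hdeg e δe) x₀ (hvol e δe (sweepSet σ j)) +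
          (1 / (2 + γ)) *
            (LScurve σ (hdeg e δe) x
                (hvol e δe (sweepSet σ j) -
                  (1 + 2 * deltaBar e δe (sweepSet σ j))⁻¹ *
                    hcut e δe (sweepSet σ j)) +
              LScurve σ (hdeg e δe) x
                (hvol e δe (sweepSet σ j) +
                  (1 + 2 * deltaBar e δe (sweepSet σ j))⁻¹ *
                    hcut e δe (sweepSet σ j)))) ∧
      ∀ k ∈ Set.Icc (0 : ℝ) (hM e δe),
        LScurve σ (hdeg e δe) x k ≤ LScurve σ₀ (hdeg e δe) x₀ k := by
  classical
  set d := hdeg e δe with hd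
  set β := (hvol e δe S)⁻¹ with hβ
  have hβpos : 0 < β := inv_pos.2 hS0
  have hxr : ∀ v, 0 ≤ x v ∧ x v ≤ β := LSaux.x_bounds hcard hδe hcov hγ hS0 hx
  have hd0 : ∀ v, 0 ≤ d v := LSaux.hdeg_nonneg hδe
  have hd1 : ∀ v, 1 ≤ d v := LSaux.hdeg_one_le hcard hδe hcov
  have hx0 : ∀ v, 0 ≤ x v := fun v => (hxr v).1
  have hx₀β : ∀ v, x₀ v = if v ∈ S then β else 0 := by
    intro v; rw [hx₀ v]
    by_cases h : v ∈ S <;> simp [h, hβ, one_div]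
  have hx₀0 : ∀ v, 0 ≤ x₀ v := by
    intro v; rw [hx₀β v]; split
    · exact hβpos.le
    · exact le_rfl
  have hsumrule := LSaux.sum_rule hcard hδe hγ hS0 hx
  have hMform : hM e δe = ∑ v : V, d v := by
    unfold hM hvol; rw [hd]
  have hsweepn : sweepSet σ (Fintype.card V) = univ := by
    ext v
    rw [LSaux.mem_sweep]
    simp only [mem_univ, iff_true]
    exact (σ.symm v).isLt
  have hcumn : cumVol σ d (Fintype.card V) = hM e δe := by
    rw [LSaux.cumVol_total, hMform]
  have hIxM : LScurve σ d x (hM e δe) = ∑ v : V, x v * d v := by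
    rw [← hcumn, LSaux.LS_breakpoint σ d x hd0 (le_refl (Fintype.card V)), hsweepn]
  have hsumdx : ∑ v : V, x v * d v = ∑ v : V, x₀ v * d v := by
    have h1 : ∑ v : V, x v * d v - ∑ v : V, x₀ v * d v
        = ∑ v : V, hdeg e δe v * (x v - (if v ∈ S then (1:ℝ) else 0) / hvol e δe S) := by
      rw [← sum_sub_distrib]
      apply sum_congr rfl
      intro v _
      rw [hx₀ v, hd]
      ring
    rw [hsumrule] at h1
    linarith
  have hsumdx₀ : ∑ v : V, x₀ v * d v = β * ∑ v ∈ S, d v := by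
    have h1 : ∀ v : V, x₀ v * d v = if v ∈ S then β * d v else 0 := by
      intro v; rw [hx₀β v]; split
      · rfl
      · rw [zero_mul]
    rw [sum_congr rfl fun v _ => h1 v, ← sum_filter]
    rw [show univ.filter (fun v => v ∈ S) = S by ext v; simp]
    rw [mul_sum]
  constructor
  · -- Part 1
    intro j hj h0 hMj
    obtain ⟨a, b, hab, hmin⟩ : ∃ a b : E → ℝ,
        (∀ ε, Qe e δe ε x = innerQ e δe ε x (a ε) (b ε)) ∧
        ∀ ε, ∀ a' b', innerQ e δe ε x (a ε) (b ε) ≤ innerQ e δe ε x a' b' := by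
      have h := fun ε : E => LSaux.exists_ab (e := e) hδe hβpos.le hxr ε
      choose a b h1 h2 using h
      exact ⟨a, b, h1, h2⟩
    have hstata : ∀ ε, ∑ w ∈ e ε, max (x w - a ε) 0 = δe ε * max (a ε - b ε) 0 :=
      fun ε => LSaux.stat_a hδe (hmin ε)
    have hstatb : ∀ ε, ∑ w ∈ e ε, max (b ε - x w) 0 = δe ε * max (a ε - b ε) 0 :=
      fun ε => LSaux.stat_b hδe (hmin ε)
    have hba : ∀ ε, b ε ≤ a ε := fun ε => LSaux.b_le_a hcard hδe (hmin ε)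
    have hstatv := LSaux.stat_v hδe hx a b hab
    set Sj := sweepSet σ j with hSj
    set k := hvol e δe Sj with hk
    set δb := deltaBar e δe Sj with hδb
    set cu := hcut e δe Sj with hcu
    set sσ := (1 + 2*δb)⁻¹ with hsσ
    set t := sσ * cu with ht
    have hδb0 : 0 ≤ δb := LSaux.deltaBar_nonneg hδe Sj
    have hsσpos : 0 < sσ := by rw [hsσ]; exact inv_pos.2 (by linarith)
    set Bd := fun ε : E => (e ε ∩ Sj).Nonempty ∧ (e ε \ Sj).Nonempty with hBdd
    have hbd_mem : ∀ ε, Bd ε → ε ∈ hbdry e Sj := fun ε h => h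
    have hσ3 : ∀ ε, Bd ε → sσ ≤ 1/3 := by
      intro ε h
      have h1 : (1:ℝ) ≤ δb := LSaux.one_le_deltaBar hcard hδe (hbd_mem ε h)
      rw [hsσ]
      have h3 : (3:ℝ) ≤ 1 + 2*δb := by linarith
      calc (1+2*δb)⁻¹ ≤ (3:ℝ)⁻¹ := by
            apply inv_anti₀ (by norm_num) h3
        _ = 1/3 := by norm_num
    have hc0 : ∀ ε, 0 ≤ hsplit e δe ε Sj := fun ε => LSaux.hsplit_nonneg hδe ε Sj
    have hcle : ∀ ε, Bd ε → hsplit e δe ε Sj ≤ δb := by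
      intro ε h
      refine le_trans (le_min (LSaux.hsplit_le_delta ε Sj) ?_)
        (LSaux.le_deltaBar (hbd_mem ε h))
      have h1 := LSaux.hsplit_le_inter (e := e) (δe := δe) ε Sj
      have h2 := LSaux.hsplit_le_sdiff (e := e) (δe := δe) ε Sj
      have h3 := LSaux.card_inter_sdiff (e := e) ε Sj
      have h4 : ((e ε ∩ Sj).card : ℝ) + ((e ε \ Sj).card : ℝ) = ((e ε).card : ℝ) := by
        exact_mod_cast congrArg (Nat.cast : ℕ → ℝ) h3
      linarith
    have hsc1 : ∀ ε, Bd ε → sσ * hsplit e δe ε Sj ≤ 1 := by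
      intro ε h
      have h1 := hcle ε h
      have h2 : (0:ℝ) < 1 + 2*δb := by linarith
      rw [hsσ, inv_mul_le_iff₀ h2, mul_one]
      linarith [hc0 ε]
    have hcBd0 : ∀ ε, ¬ Bd ε → hsplit e δe ε Sj = 0 := by
      intro ε h
      rw [hBdd] at h
      rw [not_and_or] at h
      rcases h with h | h
      · exact LSaux.hsplit_eq_zero_left hδe (not_nonempty_iff_eq_empty.1 h)
      · exact LSaux.hsplit_eq_zero_right hδe (not_nonempty_iff_eq_empty.1 h)
    have hSne : S.Nonempty := by
      by_contra h
      rw [not_nonempty_iff_eq_empty] at h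
      rw [h] at hS0
      simp [hvol] at hS0
    have hVne : Nonempty V := ⟨hSne.choose⟩
    have hord : ∀ v, v ∈ Sj → ∀ u, u ∉ Sj → x u ≤ x v := by
      intro v hv u hu
      rw [hSj, LSaux.mem_sweep] at hv hu
      push_neg at hu
      have hle : (σ.symm v) ≤ (σ.symm u) := by rw [Fin.le_def]; omega
      have := hσ _ _ hle
      simpa using this
    have hvex : ∀ ε : E, ∃ v : V, Bd ε → (v ∈ e ε ∩ Sj ∧ ∀ w ∈ e ε ∩ Sj, x v ≤ x w) := by
      intro ε
      by_cases h : Bd ε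
      · obtain ⟨v, hv1, hv2⟩ := Finset.exists_min_image (e ε ∩ Sj) x h.1
        exact ⟨v, fun _ => ⟨hv1, hv2⟩⟩
      · exact ⟨Classical.arbitrary V, fun hb => absurd hb h⟩
    choose vst hvst using hvex
    have huex : ∀ ε : E, ∃ u : V, Bd ε → (u ∈ e ε \ Sj ∧ ∀ w ∈ e ε \ Sj, x w ≤ x u) := by
      intro ε
      by_cases h : Bd ε
      · obtain ⟨u, hu1, hu2⟩ := Finset.exists_max_image (e ε \ Sj) x h.2
        exact ⟨u, fun _ => ⟨hu1, hu2⟩⟩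
      · exact ⟨Classical.arbitrary V, fun hb => absurd hb h⟩
    choose ust hust using huex
    set rw' := fun (ε : E) (w : V) => if w = vst ε
        then (if Bd ε then sσ * hsplit e δe ε Sj else 0) else 0 with hrw
    set sw' := fun (ε : E) (w : V) => if w = ust ε
        then (if Bd ε then sσ * hsplit e δe ε Sj else 0) else 0 with hsw
    set αw := fun v : V => (if v ∈ Sj then d v else 0) - ∑ ε : E, rw' ε v with hαw
    set βw := fun v : V => (if v ∈ Sj then d v else 0) + ∑ ε : E, sw' ε v with hβw
    have hval0 : ∀ ε, 0 ≤ (if Bd ε then sσ * hsplit e δe ε Sj else 0) := by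
      intro ε
      by_cases h : Bd ε
      · rw [if_pos h]; exact mul_nonneg hsσpos.le (hc0 ε)
      · rw [if_neg h]
    have hval1 : ∀ ε, (if Bd ε then sσ * hsplit e δe ε Sj else 0) ≤ 1 := by
      intro ε
      by_cases h : Bd ε
      · rw [if_pos h]; exact hsc1 ε h
      · rw [if_neg h]; norm_num
    have hvalc : ∀ ε, (if Bd ε then sσ * hsplit e δe ε Sj else 0)
        = sσ * hsplit e δe ε Sj := by
      intro ε
      by_cases h : Bd ε
      · rw [if_pos h]
      · rw [if_neg h, hcBd0 ε h, mul_zero]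
    have hr0 : ∀ ε w, 0 ≤ rw' ε w := by
      intro ε w
      rw [hrw]; dsimp only
      by_cases h : w = vst ε
      · rw [if_pos h]; exact hval0 ε
      · rw [if_neg h]
    have hs0' : ∀ ε w, 0 ≤ sw' ε w := by
      intro ε w
      rw [hsw]; dsimp only
      by_cases h : w = ust ε
      · rw [if_pos h]; exact hval0 ε
      · rw [if_neg h]
    have hrsum_le : ∀ w : V, ∑ ε : E, rw' ε w ≤ d w := by
      intro w
      have h1 : ∀ ε : E, rw' ε w ≤ (if w ∈ e ε then (1:ℝ) else 0) := by
        intro ε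
        rw [hrw]; dsimp only
        by_cases h2 : w = vst ε
        · rw [if_pos h2]
          by_cases h3 : Bd ε
          · have hmem : w ∈ e ε := by
              have h4 := (hvst ε h3).1
              rw [h2]; exact (mem_inter.1 h4).1
            rw [if_pos hmem]
            exact hval1 ε
          · rw [if_neg h3]
            by_cases h5 : w ∈ e ε
            · rw [if_pos h5]; norm_num
            · rw [if_neg h5]
        · rw [if_neg h2]
          by_cases h5 : w ∈ e ε
          · rw [if_pos h5]; norm_num
          · rw [if_neg h5]
      calc ∑ ε : E, rw' ε w ≤ ∑ ε : E, (if w ∈ e ε then (1:ℝ) else 0) :=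
            sum_le_sum fun ε _ => h1 ε
        _ = ((univ.filter fun ε => w ∈ e ε).card : ℝ) := by rw [sum_boole]
        _ = d w := by rw [hd]; exact (LSaux.hdeg_card hcard hδe w).symm
    have hssum_le : ∀ w : V, ∑ ε : E, sw' ε w ≤ d w := by
      intro w
      have h1 : ∀ ε : E, sw' ε w ≤ (if w ∈ e ε then (1:ℝ) else 0) := by
        intro ε
        rw [hsw]; dsimp only
        by_cases h2 : w = ust ε
        · rw [if_pos h2]
          by_cases h3 : Bd ε
          · have hmem : w ∈ e ε := by
              have h4 := (hust ε h3).1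
              rw [h2]; exact (mem_sdiff.1 h4).1
            rw [if_pos hmem]
            exact hval1 ε
          · rw [if_neg h3]
            by_cases h5 : w ∈ e ε
            · rw [if_pos h5]; norm_num
            · rw [if_neg h5]
        · rw [if_neg h2]
          by_cases h5 : w ∈ e ε
          · rw [if_pos h5]; norm_num
          · rw [if_neg h5]
      calc ∑ ε : E, sw' ε w ≤ ∑ ε : E, (if w ∈ e ε then (1:ℝ) else 0) :=
            sum_le_sum fun ε _ => h1 ε
        _ = ((univ.filter fun ε => w ∈ e ε).card : ℝ) := by rw [sum_boole]
        _ = d w := by rw [hd]; exact (LSaux.hdeg_card hcard hδe w).symm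
    have hrout : ∀ ε w, w ∉ Sj → rw' ε w = 0 := by
      intro ε w hw
      rw [hrw]; dsimp only
      by_cases h2 : w = vst ε
      · rw [if_pos h2]
        by_cases h3 : Bd ε
        · exfalso; apply hw; rw [h2]; exact (mem_inter.1 (hvst ε h3).1).2
        · rw [if_neg h3]
      · rw [if_neg h2]
    have hsin : ∀ ε w, w ∈ Sj → sw' ε w = 0 := by
      intro ε w hw
      rw [hsw]; dsimp only
      by_cases h2 : w = ust ε
      · rw [if_pos h2]
        by_cases h3 : Bd ε
        · exfalso
          have h4 := (mem_sdiff.1 (hust ε h3).1).2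
          rw [h2] at hw
          exact h4 hw
        · rw [if_neg h3]
      · rw [if_neg h2]
    have hα0 : ∀ w, 0 ≤ αw w := by
      intro w
      rw [hαw]; dsimp only
      by_cases h : w ∈ Sj
      · rw [if_pos h]; linarith [hrsum_le w]
      · rw [if_neg h]
        have hz : ∑ ε : E, rw' ε w = 0 := sum_eq_zero fun ε _ => hrout ε w h
        rw [hz]; norm_num
    have hαd : ∀ w, αw w ≤ d w := by
      intro w
      rw [hαw]; dsimp only
      have h2 : 0 ≤ ∑ ε : E, rw' ε w := sum_nonneg fun ε _ => hr0 ε w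
      by_cases h : w ∈ Sj
      · rw [if_pos h]; linarith
      · rw [if_neg h]; linarith [hd0 w]
    have hβ0' : ∀ w, 0 ≤ βw w := by
      intro w
      rw [hβw]; dsimp only
      have h2 : 0 ≤ ∑ ε : E, sw' ε w := sum_nonneg fun ε _ => hs0' ε w
      by_cases h : w ∈ Sj
      · rw [if_pos h]; linarith [hd0 w]
      · rw [if_neg h]; linarith
    have hβd : ∀ w, βw w ≤ d w := by
      intro w
      rw [hβw]; dsimp only
      by_cases h : w ∈ Sj
      · rw [if_pos h]
        have hz : ∑ ε : E, sw' ε w = 0 := sum_eq_zero fun ε _ => hsin ε w h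
        rw [hz]; linarith
      · rw [if_neg h]; linarith [hssum_le w]
    have hkform : ∑ w : V, (if w ∈ Sj then d w else 0) = k := by
      rw [← sum_filter, show univ.filter (fun w => w ∈ Sj) = Sj from by ext v; simp]
      rw [hk]
      rfl
    have hsum_rw : ∑ w : V, ∑ ε : E, rw' ε w = t := by
      rw [sum_comm]
      have h1 : ∀ ε : E, ∑ w : V, rw' ε w = sσ * hsplit e δe ε Sj := by
        intro ε
        rw [hrw]; dsimp only
        rw [Finset.sum_ite_eq' univ (vst ε)
          (fun _ => (if Bd ε then sσ * hsplit e δe ε Sj else 0))]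
        rw [if_pos (mem_univ _)]
        exact hvalc ε
      rw [sum_congr rfl fun ε _ => h1 ε, ← mul_sum, ht, hcu]
      rfl
    have hsum_sw : ∑ w : V, ∑ ε : E, sw' ε w = t := by
      rw [sum_comm]
      have h1 : ∀ ε : E, ∑ w : V, sw' ε w = sσ * hsplit e δe ε Sj := by
        intro ε
        rw [hsw]; dsimp only
        rw [Finset.sum_ite_eq' univ (ust ε)
          (fun _ => (if Bd ε then sσ * hsplit e δe ε Sj else 0))]
        rw [if_pos (mem_univ _)]
        exact hvalc ε
      rw [sum_congr rfl fun ε _ => h1 ε, ← mul_sum, ht, hcu]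
      rfl
    have hαsum : ∑ w : V, αw w = k - t := by
      rw [hαw]; dsimp only
      rw [sum_sub_distrib, hkform, hsum_rw]
    have hβsum : ∑ w : V, βw w = k + t := by
      rw [hβw]; dsimp only
      rw [sum_add_distrib, hkform, hsum_sw]
    have hIa : ∑ w : V, αw w * x w ≤ LScurve σ d x (k - t) := by
      have h1 := LSaux.LS_max σ d x hd0 αw hσ hx0 hα0 hαd
      rwa [hαsum] at h1
    have hIb : ∑ w : V, βw w * x w ≤ LScurve σ d x (k + t) := by
      have h1 := LSaux.LS_max σ d x hd0 βw hσ hx0 hβ0' hβd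
      rwa [hβsum] at h1
    have hIs : ∑ w : V, (if w ∈ Sj then d w else 0) * x₀ w ≤ LScurve σ₀ d x₀ k := by
      have h1 := LSaux.LS_max σ₀ d x₀ hd0 (fun w => if w ∈ Sj then d w else 0) hσ₀ hx₀0
        (fun w => by split
                     · exact hd0 w
                     · exact le_rfl)
        (fun w => by split
                     · exact le_rfl
                     · exact hd0 w)
      rwa [hkform] at h1
    have hIk : LScurve σ d x k = ∑ v ∈ Sj, x v * d v := by
      rw [hk, hSj, LSaux.hvol_sweep, ← hd, LSaux.LS_breakpoint σ d x hd0 hj]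
    have hswap : ∀ F : V → E → ℝ,
        ∑ v ∈ Sj, ∑ ε ∈ univ.filter (fun ε => v ∈ e ε), F v ε
        = ∑ ε : E, ∑ v ∈ e ε ∩ Sj, F v ε := by
      intro F
      simp_rw [sum_filter]
      rw [sum_comm]
      apply sum_congr rfl
      intro ε _
      rw [← sum_filter]
      apply sum_congr _ (fun _ _ => rfl)
      ext v
      simp only [mem_filter, mem_inter]
      tauto
    have hper_v : ∀ v ∈ Sj, ∑ ε ∈ univ.filter (fun ε => v ∈ e ε),
        (2 * x v - (max (x v - a ε) 0 - max (b ε - x v) 0))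
        = (2 + γ) * (x v * d v) - γ * (x₀ v * d v) := by
      intro v _
      have h1 : ∑ ε ∈ univ.filter (fun ε => v ∈ e ε), (2 * x v)
          = 2 * (x v * hdeg e δe v) := by
        rw [sum_const, nsmul_eq_mul, LSaux.hdeg_card hcard hδe v]
        ring
      have h2 := hstatv v
      have h3 : x₀ v = (if v ∈ S then (1:ℝ) else 0) / hvol e δe S := hx₀ v
      rw [← h3] at h2
      have h4 : ∑ ε ∈ univ.filter (fun ε => v ∈ e ε),
          (2 * x v - (max (x v - a ε) 0 - max (b ε - x v) 0))
          = ∑ ε ∈ univ.filter (fun ε => v ∈ e ε), (2 * x v)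
            - ∑ ε ∈ univ.filter (fun ε => v ∈ e ε),
                (max (x v - a ε) 0 - max (b ε - x v) 0) :=
        sum_sub_distrib _ _
      rw [h4, h1, hd]
      linear_combination -h2
    have hsum1 : ∑ v ∈ Sj, ∑ ε ∈ univ.filter (fun ε => v ∈ e ε),
        (2 * x v - (max (x v - a ε) 0 - max (b ε - x v) 0))
        = (2 + γ) * ∑ v ∈ Sj, x v * d v - γ * ∑ v ∈ Sj, x₀ v * d v := by
      rw [sum_congr rfl hper_v, sum_sub_distrib, mul_sum, mul_sum]
    have hedge : ∀ ε : E, ∑ v ∈ e ε ∩ Sj,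
        (2 * x v - (max (x v - a ε) 0 - max (b ε - x v) 0))
        ≤ ∑ v ∈ e ε ∩ Sj, 2 * x v
          + ((if Bd ε then sσ * hsplit e δe ε Sj else 0) * x (ust ε)
             - (if Bd ε then sσ * hsplit e δe ε Sj else 0) * x (vst ε)) := by
      intro ε
      have hpart_a : ∑ w ∈ e ε ∩ Sj, max (x w - a ε) 0
          + ∑ w ∈ e ε \ Sj, max (x w - a ε) 0 = δe ε * max (a ε - b ε) 0 := by
        rw [Finset.sum_inter_add_sum_sdiff]
        exact hstata ε
      have hpart_b : ∑ w ∈ e ε ∩ Sj, max (b ε - x w) 0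
          + ∑ w ∈ e ε \ Sj, max (b ε - x w) 0 = δe ε * max (a ε - b ε) 0 := by
        rw [Finset.sum_inter_add_sum_sdiff]
        exact hstatb ε
      have e1 : ∑ v ∈ e ε ∩ Sj, (2 * x v - (max (x v - a ε) 0 - max (b ε - x v) 0))
          = ∑ v ∈ e ε ∩ Sj, 2 * x v - ∑ v ∈ e ε ∩ Sj, max (x v - a ε) 0
            + ∑ v ∈ e ε ∩ Sj, max (b ε - x v) 0 := by
        rw [sum_congr rfl (fun v _ => show
          2 * x v - (max (x v - a ε) 0 - max (b ε - x v) 0)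
          = 2 * x v - max (x v - a ε) 0 + max (b ε - x v) 0 from by ring)]
        rw [sum_add_distrib, sum_sub_distrib]
      by_cases hb : Bd ε
      · rw [if_pos hb]
        have hYle : ∀ w ∈ e ε ∩ Sj, x (vst ε) ≤ x w := (hvst ε hb).2
        have hXge : ∀ w ∈ e ε \ Sj, x w ≤ x (ust ε) := (hust ε hb).2
        have hXY : x (ust ε) ≤ x (vst ε) :=
          hord (vst ε) (mem_inter.1 (hvst ε hb).1).2 (ust ε)
            (mem_sdiff.1 (hust ε hb).1).2
        have hsp := LSaux.spade (A := e ε ∩ Sj) (B := e ε \ Sj) x hb.1 hb.2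
          hpart_a hpart_b (hba ε) hYle hXge hXY hsσpos.le (hσ3 ε hb) (hsc1 ε hb)
          (LSaux.hsplit_le_inter ε Sj) (LSaux.hsplit_le_sdiff ε Sj)
          (LSaux.hsplit_le_delta ε Sj) (hc0 ε)
        have e2 : ∑ u ∈ e ε \ Sj, (max (x u - a ε) 0 - max (b ε - x u) 0)
            = ∑ u ∈ e ε \ Sj, max (x u - a ε) 0
              - ∑ u ∈ e ε \ Sj, max (b ε - x u) 0 := sum_sub_distrib _ _
        rw [e2] at hsp
        linarith [e1, hpart_a, hpart_b, hsp]
      · rw [if_neg hb, zero_mul, zero_mul, sub_zero, add_zero]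
        rcases not_and_or.1 (by rw [hBdd] at hb; exact hb) with h | h
        · have hin : e ε ∩ Sj = ∅ := not_nonempty_iff_eq_empty.1 h
          rw [hin]
          simp
        · have hout : e ε \ Sj = ∅ := not_nonempty_iff_eq_empty.1 h
          rw [hout, sum_empty, add_zero] at hpart_a hpart_b
          linarith [e1]
    have hsum2 : ∑ ε : E, ∑ v ∈ e ε ∩ Sj, (2 * x v) = 2 * ∑ v ∈ Sj, x v * d v := by
      rw [← hswap (fun v _ => 2 * x v)]
      have hv : ∀ v ∈ Sj, ∑ _ε ∈ univ.filter (fun ε => v ∈ e ε), 2 * x v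
          = 2 * (x v * d v) := by
        intro v _
        rw [sum_const, nsmul_eq_mul, hd, LSaux.hdeg_card hcard hδe v]
        ring
      rw [sum_congr rfl hv, ← mul_sum]
    have hs' : ∀ ε : E, ∑ w : V, sw' ε w * x w
        = (if Bd ε then sσ * hsplit e δe ε Sj else 0) * x (ust ε) := by
      intro ε
      rw [hsw]; dsimp only
      rw [sum_congr rfl (fun w _ => show
        (if w = ust ε then (if Bd ε then sσ * hsplit e δe ε Sj else 0) else 0) * x w
        = (if w = ust ε then (if Bd ε then sσ * hsplit e δe ε Sj else 0) * x w else 0)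
        from by split <;> simp)]
      rw [Finset.sum_ite_eq' univ (ust ε)
        (fun w => (if Bd ε then sσ * hsplit e δe ε Sj else 0) * x w)]
      rw [if_pos (mem_univ _)]
    have hr' : ∀ ε : E, ∑ w : V, rw' ε w * x w
        = (if Bd ε then sσ * hsplit e δe ε Sj else 0) * x (vst ε) := by
      intro ε
      rw [hrw]; dsimp only
      rw [sum_congr rfl (fun w _ => show
        (if w = vst ε then (if Bd ε then sσ * hsplit e δe ε Sj else 0) else 0) * x w
        = (if w = vst ε then (if Bd ε then sσ * hsplit e δe ε Sj else 0) * x w else 0)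
        from by split <;> simp)]
      rw [Finset.sum_ite_eq' univ (vst ε)
        (fun w => (if Bd ε then sσ * hsplit e δe ε Sj else 0) * x w)]
      rw [if_pos (mem_univ _)]
    have hsum3 : ∑ ε : E, ((if Bd ε then sσ * hsplit e δe ε Sj else 0) * x (ust ε)
        - (if Bd ε then sσ * hsplit e δe ε Sj else 0) * x (vst ε))
        = ∑ w : V, (∑ ε : E, sw' ε w) * x w - ∑ w : V, (∑ ε : E, rw' ε w) * x w := by
      calc ∑ ε : E, ((if Bd ε then sσ * hsplit e δe ε Sj else 0) * x (ust ε)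
          - (if Bd ε then sσ * hsplit e δe ε Sj else 0) * x (vst ε))
          = ∑ ε : E, (∑ w : V, sw' ε w * x w - ∑ w : V, rw' ε w * x w) :=
            sum_congr rfl fun ε _ => by rw [hs' ε, hr' ε]
        _ = ∑ ε : E, ∑ w : V, sw' ε w * x w
            - ∑ ε : E, ∑ w : V, rw' ε w * x w := sum_sub_distrib _ _
        _ = ∑ w : V, ∑ ε : E, sw' ε w * x w
            - ∑ w : V, ∑ ε : E, rw' ε w * x w := by
            congr 1 <;> exact Finset.sum_comm
        _ = ∑ w : V, (∑ ε : E, sw' ε w) * x w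
            - ∑ w : V, (∑ ε : E, rw' ε w) * x w := by
            rw [sum_congr rfl fun w _ =>
                  (Finset.sum_mul univ (fun ε => sw' ε w) (x w)).symm,
                sum_congr rfl fun w _ =>
                  (Finset.sum_mul univ (fun ε => rw' ε w) (x w)).symm]
    have hitef : ∀ z : V → ℝ, ∑ w : V, (if w ∈ Sj then d w else 0) * z w
        = ∑ v ∈ Sj, z v * d v := by
      intro z
      rw [sum_congr rfl (fun w _ => show (if w ∈ Sj then d w else 0) * z w
        = (if w ∈ Sj then d w * z w else 0) from by split <;> simp)]
      rw [← sum_filter, show univ.filter (fun w => w ∈ Sj) = Sj from by ext v; simp]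
      exact sum_congr rfl fun v _ => mul_comm _ _
    have hαx : ∑ w : V, αw w * x w
        = ∑ v ∈ Sj, x v * d v - ∑ w : V, (∑ ε : E, rw' ε w) * x w := by
      rw [hαw]; dsimp only
      rw [sum_congr rfl (fun w _ => show
        ((if w ∈ Sj then d w else 0) - ∑ ε : E, rw' ε w) * x w
        = (if w ∈ Sj then d w else 0) * x w - (∑ ε : E, rw' ε w) * x w from by ring)]
      rw [sum_sub_distrib, hitef]
    have hβx : ∑ w : V, βw w * x w
        = ∑ v ∈ Sj, x v * d v + ∑ w : V, (∑ ε : E, sw' ε w) * x w := by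
      rw [hβw]; dsimp only
      rw [sum_congr rfl (fun w _ => show
        ((if w ∈ Sj then d w else 0) + ∑ ε : E, sw' ε w) * x w
        = (if w ∈ Sj then d w else 0) * x w + (∑ ε : E, sw' ε w) * x w from by ring)]
      rw [sum_add_distrib, hitef]
    have hmaster : (2 + γ) * ∑ v ∈ Sj, x v * d v
        ≤ γ * ∑ v ∈ Sj, x₀ v * d v
          + ∑ w : V, αw w * x w + ∑ w : V, βw w * x w := by
      have hA := hswap (fun v ε => 2 * x v - (max (x v - a ε) 0 - max (b ε - x v) 0))
      have hB : ∑ ε : E, ∑ v ∈ e ε ∩ Sj,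
          (2 * x v - (max (x v - a ε) 0 - max (b ε - x v) 0))
          ≤ ∑ ε : E, (∑ v ∈ e ε ∩ Sj, 2 * x v
            + ((if Bd ε then sσ * hsplit e δe ε Sj else 0) * x (ust ε)
               - (if Bd ε then sσ * hsplit e δe ε Sj else 0) * x (vst ε))) :=
        sum_le_sum fun ε _ => hedge ε
      rw [sum_add_distrib, hsum2, hsum3] at hB
      rw [← hA, hsum1] at hB
      linarith [hαx, hβx, hB]
    have h2γ : (0:ℝ) < 2 + γ := by linarith
    have hIs' : γ * ∑ v ∈ Sj, x₀ v * d v ≤ γ * LScurve σ₀ d x₀ k := by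
      apply mul_le_mul_of_nonneg_left _ hγ.le
      rw [← hitef x₀]
      exact hIs
    have hfin : (2 + γ) * LScurve σ d x k
        ≤ γ * LScurve σ₀ d x₀ k + (LScurve σ d x (k - t) + LScurve σ d x (k + t)) := by
      rw [hIk]
      linarith [hmaster, hIa, hIb, hIs']
    have hcomb : γ / (2+γ) * LScurve σ₀ d x₀ k
        + 1/(2+γ) * (LScurve σ d x (k - t) + LScurve σ d x (k + t))
        = (γ * LScurve σ₀ d x₀ k + (LScurve σ d x (k - t) + LScurve σ d x (k + t))) / (2+γ) := by
      field_simp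
    rw [hcomb, le_div_iff₀ h2γ]
    linarith [hfin]
  · -- Part 2
    rintro k ⟨hk0, hkM⟩
    have hseed := LSaux.seed_curve σ₀ d hd0 hβpos x₀ hx₀β hσ₀ hk0
    rw [hseed]
    rcases le_total k (∑ v ∈ S, d v) with hc | hc
    · rw [min_eq_left hc]
      exact LSaux.LS_le_bound σ d x hd0 hβpos.le hk0 fun v => (hxr v).2
    · rw [min_eq_right hc]
      have h1 : LScurve σ d x k ≤ LScurve σ d x (hM e δe) :=
        LSaux.LS_mono σ d x hd0 hx0 hkM
      linarith [hIxM, hsumdx, hsumdx₀]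
end

section
/- Let m, k, k₊, k₋ be integers with m ≥ 2, 1 ≤ k ≤ k₊, k₋ ≥ 1 and k₊ + k₋ ≤ m, and let δ > 0 be real. Then k · ( (k₊ − k)(k₋ + δ) + k₋ δ ) / ( k₊ k₋ + δ(k₊ + k₋) ) ≥ min{k, m − k, δ} / ( min{δ, m/2} + 2 ). -/
/-- First case (`k ≤ k₊`) of the key algebraic inequality in the Lovász–Simonovits
diffusion lemma for hypergraphs with δ-linear splitting functions. -/
theorem ls_algebra_case_one (m k kp km : ℕ) (δ : ℝ)
    (hm : 2 ≤ m) (hk1 : 1 ≤ k) (hkkp : k ≤ kp) (hkm : 1 ≤ km)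
    (hsum : kp + km ≤ m) (hδ : 0 < δ) :
    min (min (k : ℝ) ((m : ℝ) - k)) δ / (min δ ((m : ℝ) / 2) + 2) ≤
      (k : ℝ) * (((kp : ℝ) - k) * ((km : ℝ) + δ) + (km : ℝ) * δ) /
        ((kp : ℝ) * km + δ * ((kp : ℝ) + km)) := by
  have hK : (1:ℝ) ≤ (k:ℝ) := by exact_mod_cast hk1
  have hP : (k:ℝ) ≤ (kp:ℝ) := by exact_mod_cast hkkp
  have hM : (1:ℝ) ≤ (km:ℝ) := by exact_mod_cast hkm
  have hS : (kp:ℝ) + (km:ℝ) ≤ (m:ℝ) := by exact_mod_cast hsum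
  have hm2 : (2:ℝ) ≤ (m:ℝ) := by exact_mod_cast hm
  set s := min (min (k:ℝ) ((m:ℝ) - k)) δ with hs
  set t0 := min δ ((m:ℝ)/2) with ht0
  have hsδ : s ≤ δ := min_le_right _ _
  have hsK : s ≤ (k:ℝ) := le_trans (min_le_left _ _) (min_le_left _ _)
  have hsmK : s ≤ (m:ℝ) - k := le_trans (min_le_left _ _) (min_le_right _ _)
  have hsm2 : s ≤ (m:ℝ)/2 := by linarith
  have hst0 : s ≤ t0 := le_min hsδ hsm2
  have ht0pos : 0 < t0 := lt_min hδ (by linarith)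
  have hspos : 0 < s := by
    have h1 : (0:ℝ) < (k:ℝ) := by linarith
    have h2 : (0:ℝ) < (m:ℝ) - k := by nlinarith
    exact lt_min (lt_min h1 h2) hδ
  have hd1 : 0 < t0 + 2 := by linarith
  have hd2 : 0 < (kp:ℝ) * km + δ * ((kp:ℝ) + km) := by nlinarith
  rw [div_le_div_iff₀ hd1 hd2]
  rcases eq_or_lt_of_le hP with h | h
  · -- k = kp
    rw [← h]
    nlinarith [mul_nonneg (mul_nonneg (sub_nonneg.2 hsδ) (by linarith : (0:ℝ) ≤ (k:ℝ)))
        (by linarith : (0:ℝ) ≤ (km:ℝ)),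
      mul_nonneg (mul_nonneg (sub_nonneg.2 hst0) (le_of_lt hδ))
        (by linarith : (0:ℝ) ≤ (k:ℝ)),
      mul_nonneg (mul_nonneg (mul_nonneg (le_of_lt ht0pos) (le_of_lt hδ))
        (by linarith : (0:ℝ) ≤ (k:ℝ))) (by linarith : (0:ℝ) ≤ (km:ℝ) - 1),
      mul_nonneg (mul_nonneg (sub_nonneg.2 hsK) (le_of_lt hδ))
        (by linarith : (0:ℝ) ≤ (km:ℝ))]
  · -- k < kp, so k + 1 ≤ kp
    have hP1 : (k:ℝ) + 1 ≤ (kp:ℝ) := by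
      have : k + 1 ≤ kp := by exact_mod_cast Nat.succ_le_of_lt (by exact_mod_cast h)
      exact_mod_cast this
    have ha : (1:ℝ) ≤ (kp:ℝ) - k := by linarith
    have hδ' : (0:ℝ) ≤ δ := le_of_lt hδ
    have h1 : 0 ≤ (δ - s) * (k:ℝ) * (km:ℝ) :=
      mul_nonneg (mul_nonneg (by linarith) (by linarith)) (by linarith)
    have h2 : 0 ≤ ((k:ℝ) - s) * ((kp:ℝ) - k) * (km:ℝ) :=
      mul_nonneg (mul_nonneg (by linarith) (by linarith)) (by linarith)
    have h3 : 0 ≤ (t0 + 1 - s) * δ * (k:ℝ) :=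
      mul_nonneg (mul_nonneg (by linarith) hδ') (by linarith)
    have h4 : 0 ≤ (t0 + 1) * δ * (k:ℝ) * ((kp:ℝ) - k - 1) :=
      mul_nonneg (mul_nonneg (mul_nonneg (by linarith) hδ') (by linarith)) (by linarith)
    have h5 : 0 ≤ ((k:ℝ) - s) * δ * ((kp:ℝ) - k) :=
      mul_nonneg (mul_nonneg (by linarith) hδ') (by linarith)
    have h6 : 0 ≤ (t0 + 1 - s) * δ * (km:ℝ) :=
      mul_nonneg (mul_nonneg (by linarith) hδ') (by linarith)
    have h7 : 0 ≤ (t0 + 1) * δ * (km:ℝ) * ((k:ℝ) - 1) :=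
      mul_nonneg (mul_nonneg (mul_nonneg (by linarith) hδ') (by linarith)) (by linarith)
    have h8 : 0 ≤ (t0 + 1) * (k:ℝ) * ((kp:ℝ) - k) * (km:ℝ) :=
      mul_nonneg (mul_nonneg (mul_nonneg (by linarith) (by linarith)) (by linarith)) (by linarith)
    linarith [h1, h2, h3, h4, h5, h6, h7, h8]
end

section
/- Let m, k, k₊, k₋ be integers with m ≥ 2, k₊ ≥ 1, k₋ ≥ 1 and k₊ ≤ k ≤ m − k₋, and let δ > 0 be real. Then k₊ k₋ δ / ( k₊ k₋ + δ(k₊ + k₋) ) ≥ min{k, m − k, δ} / ( 2 min{δ, m/2} + 1 ). -/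
/-- Second (middle) case (`k₊ ≤ k ≤ m − k₋`) of the key algebraic inequality in the
Lovász–Simonovits diffusion lemma for hypergraphs with δ-linear splitting functions. -/
theorem ls_algebra_case_two (m k kp km : ℕ) (δ : ℝ)
    (hm : 2 ≤ m) (hkp : 1 ≤ kp) (hkm : 1 ≤ km)
    (hlo : kp ≤ k) (hhi : k ≤ m - km) (hδ : 0 < δ) :
    min (min (k : ℝ) ((m : ℝ) - k)) δ / (2 * min δ ((m : ℝ) / 2) + 1) ≤
      (kp : ℝ) * (km : ℝ) * δ / ((kp : ℝ) * km + δ * ((kp : ℝ) + km)) := by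
  have hkm' : k + km ≤ m := by omega
  have ha : (1:ℝ) ≤ kp := by exact_mod_cast hkp
  have hb : (1:ℝ) ≤ km := by exact_mod_cast hkm
  have hak : (kp:ℝ) ≤ k := by exact_mod_cast hlo
  have hbk : (k:ℝ) + km ≤ m := by exact_mod_cast hkm'
  have hm' : (2:ℝ) ≤ m := by exact_mod_cast hm
  set N : ℝ := min (min (k : ℝ) ((m : ℝ) - k)) δ with hNdef
  have hN1 : N ≤ k := le_trans (min_le_left _ _) (min_le_left _ _)
  have hN2 : N ≤ (m:ℝ) - k := le_trans (min_le_left _ _) (min_le_right _ _)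
  have hN3 : N ≤ δ := min_le_right _ _
  have hE : (0:ℝ) < (kp:ℝ) * km + δ * ((kp:ℝ) + km) := by nlinarith
  have hD : (0:ℝ) < 2 * min δ ((m:ℝ)/2) + 1 := by
    have : (0:ℝ) < min δ ((m:ℝ)/2) := lt_min hδ (by linarith)
    linarith
  rw [div_le_div_iff₀ hD hE]
  rcases le_total δ ((m:ℝ)/2) with h | h
  · rw [min_eq_left h]
    have h0 : (kp:ℝ) + km ≤ 2 * ((kp:ℝ)*km) := by
      nlinarith [mul_nonneg (sub_nonneg.2 ha) (sub_nonneg.2 hb)]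
    have h1 : (kp:ℝ)*km + δ*((kp:ℝ)+km) ≤ (kp:ℝ)*km*(2*δ+1) := by
      nlinarith [mul_le_mul_of_nonneg_left h0 hδ.le]
    nlinarith [mul_le_mul_of_nonneg_right hN3 hE.le, mul_le_mul_of_nonneg_left h1 hδ.le]
  · rw [min_eq_right h]
    have hkp0 : (0:ℝ) ≤ kp := by linarith
    have hkm0 : (0:ℝ) ≤ km := by linarith
    have hmk0 : (0:ℝ) ≤ (m:ℝ) - k := by linarith
    have t1 : N * kp ≤ ((m:ℝ) - k) * kp := mul_le_mul_of_nonneg_right hN2 hkp0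
    have t2 : N * km ≤ (k:ℝ) * km := mul_le_mul_of_nonneg_right hN1 hkm0
    have hk0 : (0:ℝ) ≤ k := by linarith
    have t3 : ((m:ℝ) - k) * kp ≤ ((m:ℝ) - k) * kp * km :=
      le_mul_of_one_le_right (mul_nonneg hmk0 hkp0) hb
    have t4 : (k:ℝ) * km ≤ (k:ℝ) * km * kp :=
      le_mul_of_one_le_right (mul_nonneg hk0 hkm0) ha
    have key : N * ((kp:ℝ) + km) ≤ (m:ℝ) * ((kp:ℝ)*km) := by
      have : N * ((kp:ℝ) + km) = N * kp + N * km := by ring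
      rw [this]
      have : (m:ℝ) * ((kp:ℝ)*km) = ((m:ℝ) - k) * kp * km + (k:ℝ) * km * kp := by ring
      rw [this]
      linarith
    have h2 : N * ((kp:ℝ)*km) ≤ δ * ((kp:ℝ)*km) :=
      mul_le_mul_of_nonneg_right hN3 (mul_nonneg hkp0 hkm0)
    linarith [mul_le_mul_of_nonneg_left key hδ.le, h2]
end

section
/- Let x₁ ≥ x₂ ≥ … ≥ x_m be real numbers, δ > 0, and let (a*, b*) be a minimizer over (a,b) ∈ ℝ² of g(a,b) = Σ_{i=1}^m ( ((x_i − a)₊)² + ((b − x_i)₊)² ) + δ ((a − b)₊)², where (t)₊ = max{t,0}. Suppose a* > b*, and set k₊ = #{ i : x_i > a* } and k₋ = #{ i : x_i < b* }. Then k₊ ≥ 1, k₋ ≥ 1, and writing D = k₊ k₋ + δ(k₊ + k₋), T = Σ_{i=1}^{k₊} x_i and B = Σ_{i=m−k₋+1}^{m} x_i, the minimizer is given explicitly by a* = ( (k₋ + δ) T + δ B ) / D and b* = ( δ T + (k₊ + δ) B ) / D. -/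
open Finset

private lemma sq_max_shift (u h : ℝ) :
    max (u + h) 0 ^ 2 ≤ max u 0 ^ 2 + 2 * max u 0 * h + h ^ 2 := by
  rcases le_total (u + h) 0 with h1 | h1
  · rw [max_eq_right h1]
    nlinarith [sq_nonneg (max u 0 + h)]
  · rw [max_eq_left h1]
    rcases le_total u 0 with h2 | h2
    · rw [max_eq_right h2]
      nlinarith [mul_nonpos_of_nonpos_of_nonneg h2 (by linarith : (0:ℝ) ≤ u + 2 * h)]
    · rw [max_eq_left h2]; nlinarith

private lemma linquad (A C : ℝ) (hC : 0 < C) (h : ∀ s : ℝ, 0 ≤ A * s + C * s ^ 2) :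
    A = 0 := by
  by_contra hA
  have h1 := h (-(A / (2 * C)))
  have he : A * (-(A / (2 * C))) + C * (-(A / (2 * C))) ^ 2 = -(A ^ 2 / (4 * C)) := by
    field_simp; ring
  rw [he] at h1
  have : 0 < A ^ 2 / (4 * C) := by positivity
  linarith

set_option maxHeartbeats 1000000 in
/-- Closed form for the optimal auxiliary values of the inner gadget minimization
`min_{a,b} Σᵢ ((xᵢ−a)₊² + (b−xᵢ)₊²) + δ (a−b)₊²` for sorted `x₁ ≥ … ≥ x_m`,
in the case `a* > b*`: with `k₊ = #{i : xᵢ > a*}`, `k₋ = #{i : xᵢ < b*}`,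
`D = k₊k₋ + δ(k₊+k₋)`, `T = Σ_{i≤k₊} xᵢ` and `B = Σ_{i>m−k₋} xᵢ`, we have `k₊,k₋ ≥ 1`,
`a* = ((k₋+δ)T + δB)/D` and `b* = (δT + (k₊+δ)B)/D`. -/
theorem gadget_minimizer_formula (m : ℕ) (x : Fin m → ℝ) (δ : ℝ) (hδ : 0 < δ)
    (hsort : ∀ i j : Fin m, i ≤ j → x j ≤ x i)
    (a b : ℝ)
    (hmin : ∀ a' b' : ℝ,
      (∑ i, ((max (x i - a) 0) ^ 2 + (max (b - x i) 0) ^ 2) + δ * (max (a - b) 0) ^ 2) ≤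
        (∑ i, ((max (x i - a') 0) ^ 2 + (max (b' - x i) 0) ^ 2) +
          δ * (max (a' - b') 0) ^ 2))
    (hab : b < a)
    (kp km : ℕ)
    (hkp : kp = (univ.filter fun i : Fin m => a < x i).card)
    (hkm : km = (univ.filter fun i : Fin m => x i < b).card)
    (T B D : ℝ)
    (hT : T = ∑ i ∈ univ.filter (fun i : Fin m => (i : ℕ) < kp), x i)
    (hB : B = ∑ i ∈ univ.filter (fun i : Fin m => m - km ≤ (i : ℕ)), x i)
    (hD : D = (kp : ℝ) * km + δ * ((kp : ℝ) + km)) :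
    1 ≤ kp ∧ 1 ≤ km ∧
      a = (((km : ℝ) + δ) * T + δ * B) / D ∧
      b = (δ * T + ((kp : ℝ) + δ) * B) / D := by
  have hmaxab : max (a - b) 0 = a - b := max_eq_left (by linarith)
  -- key perturbation inequality
  have key : ∀ s t : ℝ,
      0 ≤ (2 * δ * (a - b) - 2 * (∑ i, max (x i - a) 0)) * s
        + (2 * (∑ i, max (b - x i) 0) - 2 * δ * (a - b)) * t
        + (m : ℝ) * s ^ 2 + (m : ℝ) * t ^ 2 + δ * (s - t) ^ 2 := by
    intro s t
    have h1 := hmin (a + s) (b + t)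
    have hA : ∀ i ∈ (univ : Finset (Fin m)),
        max (x i - (a + s)) 0 ^ 2 + max ((b + t) - x i) 0 ^ 2 ≤
          (max (x i - a) 0 ^ 2 + max (b - x i) 0 ^ 2)
            + (max (x i - a) 0 * (-2 * s) + max (b - x i) 0 * (2 * t))
            + (s ^ 2 + t ^ 2) := by
      intro i _
      have e1 := sq_max_shift (x i - a) (-s)
      have e2 := sq_max_shift (b - x i) t
      rw [show x i - (a + s) = (x i - a) + (-s) by ring,
        show (b + t) - x i = (b - x i) + t by ring]
      linarith [e1, e2]
    have hsum : ∑ i, (max (x i - (a + s)) 0 ^ 2 + max ((b + t) - x i) 0 ^ 2) ≤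
        (∑ i, (max (x i - a) 0 ^ 2 + max (b - x i) 0 ^ 2))
          + ((∑ i, max (x i - a) 0) * (-2 * s) + (∑ i, max (b - x i) 0) * (2 * t))
          + (m : ℝ) * (s ^ 2 + t ^ 2) := by
      calc ∑ i, (max (x i - (a + s)) 0 ^ 2 + max ((b + t) - x i) 0 ^ 2)
          ≤ ∑ i, ((max (x i - a) 0 ^ 2 + max (b - x i) 0 ^ 2)
            + (max (x i - a) 0 * (-2 * s) + max (b - x i) 0 * (2 * t))
            + (s ^ 2 + t ^ 2)) := Finset.sum_le_sum hA
        _ = _ := by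
          simp only [Finset.sum_add_distrib, ← Finset.sum_mul, Finset.sum_const,
            Finset.card_univ, Fintype.card_fin, nsmul_eq_mul]
          ring
    have hC : δ * max ((a + s) - (b + t)) 0 ^ 2 ≤
        δ * ((a - b) ^ 2 + 2 * (a - b) * (s - t) + (s - t) ^ 2) := by
      have := sq_max_shift (a - b) (s - t)
      rw [hmaxab] at this
      have h2 : max ((a + s) - (b + t)) 0 ^ 2 ≤ (a - b) ^ 2 + 2 * (a - b) * (s - t) + (s - t) ^ 2 := by
        rw [show (a + s) - (b + t) = (a - b) + (s - t) by ring]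
        exact this
      exact mul_le_mul_of_nonneg_left h2 (le_of_lt hδ)
    rw [hmaxab] at h1
    linarith [h1, hsum, hC]
  -- stationarity
  have hEa : (∑ i, max (x i - a) 0) = δ * (a - b) := by
    have := linquad (2 * δ * (a - b) - 2 * (∑ i, max (x i - a) 0)) ((m : ℝ) + δ)
      (by positivity) (fun s => by have := key s 0; linarith [this])
    linarith
  have hEb : (∑ i, max (b - x i) 0) = δ * (a - b) := by
    have := linquad (2 * (∑ i, max (b - x i) 0) - 2 * δ * (a - b)) ((m : ℝ) + δ)
      (by positivity) (fun t => by have := key 0 t; linarith [this])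
    linarith
  have hPpos : 0 < ∑ i, max (x i - a) 0 := by rw [hEa]; exact mul_pos hδ (by linarith)
  have hNpos : 0 < ∑ i, max (b - x i) 0 := by rw [hEb]; exact mul_pos hδ (by linarith)
  -- kp, km ≥ 1
  have hkp1 : 1 ≤ kp := by
    have hex : ∃ i, a < x i := by
      by_contra hno
      push_neg at hno
      have : (∑ i, max (x i - a) 0) = 0 :=
        Finset.sum_eq_zero fun i _ => max_eq_right (by linarith [hno i])
      linarith
    obtain ⟨i, hi⟩ := hex
    rw [hkp]
    exact Finset.card_pos.mpr ⟨i, Finset.mem_filter.mpr ⟨Finset.mem_univ i, hi⟩⟩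
  have hkm1 : 1 ≤ km := by
    have hex : ∃ i, x i < b := by
      by_contra hno
      push_neg at hno
      have : (∑ i, max (b - x i) 0) = 0 :=
        Finset.sum_eq_zero fun i _ => max_eq_right (by linarith [hno i])
      linarith
    obtain ⟨i, hi⟩ := hex
    rw [hkm]
    exact Finset.card_pos.mpr ⟨i, Finset.mem_filter.mpr ⟨Finset.mem_univ i, hi⟩⟩
  -- identify the filter sets with index ranges
  have hSp : (univ.filter fun i : Fin m => a < x i)
      = univ.filter (fun i : Fin m => (i : ℕ) < kp) := by
    ext i
    simp only [Finset.mem_filter, Finset.mem_univ, true_and]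
    constructor
    · intro hi
      have hsub : Finset.Iic i ⊆ univ.filter fun j : Fin m => a < x j := by
        intro j hj
        rw [Finset.mem_Iic] at hj
        exact Finset.mem_filter.mpr ⟨Finset.mem_univ j, lt_of_lt_of_le hi (hsort j i hj)⟩
      have hc := Finset.card_le_card hsub
      rw [Fin.card_Iic] at hc
      omega
    · intro hi
      by_contra hxi
      have hsub : (univ.filter fun j : Fin m => a < x j) ⊆ Finset.Iio i := by
        intro j hj
        rw [Finset.mem_filter] at hj
        rw [Finset.mem_Iio]
        by_contra hji
        push_neg at hji
        exact hxi (lt_of_lt_of_le hj.2 (hsort i j hji))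
      have hc := Finset.card_le_card hsub
      rw [Fin.card_Iio] at hc
      omega
  have hSm : (univ.filter fun i : Fin m => x i < b)
      = univ.filter (fun i : Fin m => m - km ≤ (i : ℕ)) := by
    ext i
    simp only [Finset.mem_filter, Finset.mem_univ, true_and]
    constructor
    · intro hi
      have hsub : Finset.Ici i ⊆ univ.filter fun j : Fin m => x j < b := by
        intro j hj
        rw [Finset.mem_Ici] at hj
        exact Finset.mem_filter.mpr ⟨Finset.mem_univ j, lt_of_le_of_lt (hsort i j hj) hi⟩
      have hc := Finset.card_le_card hsub
      rw [Fin.card_Ici] at hc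
      have := i.isLt
      omega
    · intro hi
      by_contra hxi
      push_neg at hxi
      have hsub : (univ.filter fun j : Fin m => x j < b) ⊆ Finset.Ioi i := by
        intro j hj
        rw [Finset.mem_filter] at hj
        rw [Finset.mem_Ioi]
        by_contra hji
        push_neg at hji
        exact absurd hj.2 (not_lt.2 (le_trans hxi (hsort j i hji)))
      have hc := Finset.card_le_card hsub
      rw [Fin.card_Ioi] at hc
      have := i.isLt
      omega
  have hcardp : (univ.filter (fun i : Fin m => (i : ℕ) < kp)).card = kp := by
    rw [← hSp, ← hkp]
  have hcardm : (univ.filter (fun i : Fin m => m - km ≤ (i : ℕ))).card = km := by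
    rw [← hSm, ← hkm]
  -- compute the sums
  have hPT : (∑ i, max (x i - a) 0) = T - (kp : ℝ) * a := by
    have h1 : (∑ i, max (x i - a) 0)
        = ∑ i ∈ univ.filter (fun i : Fin m => a < x i), (x i - a) := by
      rw [Finset.sum_filter]
      refine Finset.sum_congr rfl fun i _ => ?_
      rcases lt_or_ge a (x i) with h | h
      · rw [if_pos h, max_eq_left (by linarith)]
      · rw [if_neg (not_lt.2 h), max_eq_right (by linarith)]
    rw [h1, hSp, Finset.sum_sub_distrib, Finset.sum_const, hcardp, nsmul_eq_mul, ← hT]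
  have hNB : (∑ i, max (b - x i) 0) = (km : ℝ) * b - B := by
    have h1 : (∑ i, max (b - x i) 0)
        = ∑ i ∈ univ.filter (fun i : Fin m => x i < b), (b - x i) := by
      rw [Finset.sum_filter]
      refine Finset.sum_congr rfl fun i _ => ?_
      rcases lt_or_ge (x i) b with h | h
      · rw [if_pos h, max_eq_left (by linarith)]
      · rw [if_neg (not_lt.2 h), max_eq_right (by linarith)]
    rw [h1, hSm, Finset.sum_sub_distrib, Finset.sum_const, hcardm, nsmul_eq_mul, ← hB]
  have heq1 : T - (kp : ℝ) * a = δ * (a - b) := by rw [← hPT]; exact hEa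
  have heq2 : (km : ℝ) * b - B = δ * (a - b) := by rw [← hNB]; exact hEb
  have hkpR : (1 : ℝ) ≤ (kp : ℝ) := by exact_mod_cast hkp1
  have hkmR : (1 : ℝ) ≤ (km : ℝ) := by exact_mod_cast hkm1
  have hDpos : 0 < D := by rw [hD]; nlinarith
  refine ⟨hkp1, hkm1, ?_, ?_⟩
  · rw [eq_div_iff (ne_of_gt hDpos), hD]
    linear_combination (-(km : ℝ) - δ) * heq1 + δ * heq2
  · rw [eq_div_iff (ne_of_gt hDpos), hD]
    linear_combination (-δ) * heq1 + ((kp : ℝ) + δ) * heq2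
end
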